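/- arXiv:1701.07117 — 9 statements merged into one kernel-verified Lean document; each statement's English description precedes it below -/
import Mathlib

section
/- Let A be a ring, X a right A-module, and B a right ideal of A such that X is injective with respect to the module B_A. Then X is injective with respect to the module (AB)_A, where AB is the two-sided ideal of A generated by the right ideal B. Moreover, if the ideal AB contains a finite subset C with zero right annihilator r(C) = 0, then the module X is injective. -/
open MulOpposite

open MulOpposite

/-- The right annihilator `r(x) = {a : A | x·a = 0}` of an element `x` of a right `A`-module `X`,
as a right ideal of `A`. -/
def rightAnn (A : Type*) [Ring A] {X : Type*} [AddCommGroup X] [Module Aᵐᵒᵖ X]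
    (x : X) : Submodule Aᵐᵒᵖ A where
  carrier := {a : A | op a • x = 0}
  add_mem' := by
    intro a b ha hb
    simp only [Set.mem_setOf_eq] at *
    rw [op_add, add_smul, ha, hb, add_zero]
  zero_mem' := by simp
  smul_mem' := by
    intro c a ha
    simp only [Set.mem_setOf_eq] at *
    have h1 : c • a = a * c.unop := rfl
    rw [h1]
    have h2 : op (a * c.unop) = c * op a := by
      simp [MulOpposite.op_mul]
    rw [h2, mul_smul, ha, smul_zero]

/-- A right ideal `B` of `A` is essential if it has non-zero intersection with every
non-zero right ideal of `A`. -/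
def IsEssentialRightIdeal (A : Type*) [Ring A] (B : Submodule Aᵐᵒᵖ A) : Prop :=
  ∀ C : Submodule Aᵐᵒᵖ A, C ≠ ⊥ → B ⊓ C ≠ ⊥

/-- A right `A`-module `X` is non-singular if its singular submodule is zero, i.e. the only
element of `X` whose right annihilator is an essential right ideal of `A` is `0`. -/
def IsNonsingularMod (A : Type*) [Ring A] (X : Type*) [AddCommGroup X] [Module Aᵐᵒᵖ X] : Prop :=
  ∀ x : X, IsEssentialRightIdeal A (rightAnn A x) → x = 0

/-- The Goldie radical (second singular submodule) `G(X)` of a right `A`-module `X`: the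
intersection of all submodules `Y ⊆ X` such that `X/Y` is non-singular. -/
def goldieRadical (A : Type*) [Ring A] (X : Type*) [AddCommGroup X] [Module Aᵐᵒᵖ X] :
    Submodule Aᵐᵒᵖ X :=
  sInf {Y : Submodule Aᵐᵒᵖ X | IsNonsingularMod A (X ⧸ Y)}

/-- A module `X` is injective with respect to a module `Y` (`Y`-injective) if every homomorphism
from a submodule of `Y` to `X` extends to a homomorphism `Y → X`. -/
def IsInjectiveWrt (R : Type*) [Ring R] (X : Type*) [AddCommGroup X] [Module R X]
    (Y : Type*) [AddCommGroup Y] [Module R Y] : Prop :=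
  ∀ (Y₁ : Submodule R Y) (f : Y₁ →ₗ[R] X), ∃ g : Y →ₗ[R] X, ∀ y : Y₁, g y = f y

/-- A ring `A` is right strongly semiprime if every two-sided ideal of `A` which is essential
as a right ideal contains a finite subset with zero right annihilator. -/
def IsRightStronglySemiprime (A : Type*) [Ring A] : Prop :=
  ∀ T : TwoSidedIdeal A,
    (∀ C : Submodule Aᵐᵒᵖ A, C ≠ ⊥ → ∃ x ∈ C, x ≠ 0 ∧ x ∈ T) →
    ∃ K : Finset A, (K : Set A) ⊆ (T : Set A) ∧ ∀ a : A, (∀ k ∈ K, k * a = 0) → a = 0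

set_option synthInstance.maxHeartbeats 1000000

section Helpers

variable {R : Type*} [Ring R] {X : Type*} [AddCommGroup X] [Module R X]

/-- Relative injectivity transfers along surjections. -/
theorem isInjWrt_of_surjective {Y Y' : Type*} [AddCommGroup Y] [Module R Y]
    [AddCommGroup Y'] [Module R Y'] (π : Y →ₗ[R] Y') (hπ : Function.Surjective π)
    (h : IsInjectiveWrt R X Y) : IsInjectiveWrt R X Y' := by
  intro Z f
  obtain ⟨g, hg⟩ := h (Z.comap π) (f.comp (π.restrict (fun x hx => hx)))
  have hker : LinearMap.ker π ≤ LinearMap.ker g := by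
    intro k hk
    have hk' : π k = 0 := hk
    have hkm : k ∈ Z.comap π := by simp [Submodule.mem_comap, hk']
    have := hg ⟨k, hkm⟩
    simp only [LinearMap.comp_apply] at this
    have h0 : (π.restrict (p := Z.comap π) (q := Z) fun x hx => hx) ⟨k, hkm⟩ = 0 :=
      Subtype.ext hk'
    rw [h0, map_zero] at this
    exact this
  let h' : (Y ⧸ LinearMap.ker π) →ₗ[R] X := (LinearMap.ker π).liftQ g hker
  let e : (Y ⧸ LinearMap.ker π) ≃ₗ[R] Y' := π.quotKerEquivOfSurjective hπ
  have he : ∀ y : Y, e (Submodule.Quotient.mk y) = π y := by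
    intro y
    simp [e, LinearMap.quotKerEquivOfSurjective, LinearMap.quotKerEquivRange]
  refine ⟨h'.comp e.symm.toLinearMap, fun z => ?_⟩
  obtain ⟨y, hy⟩ := hπ (z : Y')
  have hmem : y ∈ Z.comap π := by simp [Submodule.mem_comap, hy]
  have : e.symm (z : Y') = Submodule.Quotient.mk y := by
    apply e.injective; rw [he, hy, LinearEquiv.apply_symm_apply]
  simp only [LinearMap.comp_apply, LinearEquiv.coe_toLinearMap, this]
  have : h' (Submodule.Quotient.mk y) = g y := Submodule.liftQ_apply _ _ _
  rw [this, hg ⟨y, hmem⟩]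
  exact congrArg f (Subtype.ext (by simpa using hy))

theorem isInjWrt_of_equiv {Y Y' : Type*} [AddCommGroup Y] [Module R Y]
    [AddCommGroup Y'] [Module R Y'] (e : Y ≃ₗ[R] Y')
    (h : IsInjectiveWrt R X Y) : IsInjectiveWrt R X Y' :=
  isInjWrt_of_surjective e.toLinearMap e.surjective h

theorem isInjWrt_submodule {Y : Type*} [AddCommGroup Y] [Module R Y]
    (N : Submodule R Y) (h : IsInjectiveWrt R X Y) : IsInjectiveWrt R X ↥N := by
  intro Z f
  let e := Submodule.equivMapOfInjective N.subtype N.injective_subtype Z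
  obtain ⟨g, hg⟩ := h (Z.map N.subtype) (f.comp e.symm.toLinearMap)
  refine ⟨g.comp N.subtype, fun z => ?_⟩
  have h1 := hg (e z)
  simp only [LinearMap.comp_apply, LinearEquiv.coe_toLinearMap, LinearEquiv.symm_apply_apply] at h1
  have h2 : ((e z : ↥(Z.map N.subtype)) : Y) = N.subtype (z : ↥N) :=
    Submodule.coe_equivMapOfInjective_apply _ _ _ _
  rw [← h1]
  simp only [LinearMap.comp_apply]
  exact congrArg g h2.symm

/-- If `Y` is the supremum of a family of submodules `M i` and `X` is `M i`-injective for
every `i`, then `X` is `Y`-injective. -/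
theorem isInjWrt_of_iSup_eq_top {Y : Type*} [AddCommGroup Y] [Module R Y]
    {ι : Sort*} (M : ι → Submodule R Y) (hsup : ⨆ i, M i = ⊤)
    (hinj : ∀ i, IsInjectiveWrt R X ↥(M i)) : IsInjectiveWrt R X Y := by
  intro Y₁ f
  haveI : Fact (Function.Injective Y₁.subtype) := ⟨Y₁.injective_subtype⟩
  set E := Module.Baer.extensionOfMax Y₁.subtype f with hE
  have key : ∀ i, M i ≤ E.domain := by
    intro i
    let D : Submodule R ↥(M i) := E.domain.comap (M i).subtype
    let j : D →ₗ[R] E.domain :=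
      LinearMap.codRestrict E.domain ((M i).subtype.comp D.subtype) (fun d => d.2)
    obtain ⟨h, hh⟩ := hinj i D (E.toLinearPMap.toFun.comp j)
    let P2 : Y →ₗ.[R] X := ⟨M i, h⟩
    have compat : ∀ (x : E.domain) (y : P2.domain), (x : Y) = y →
        E.toLinearPMap x = P2 y := by
      intro x y hxy
      have hyD : y ∈ D := show ((y : ↥(M i)) : Y) ∈ E.domain by rw [← hxy]; exact x.2
      have hx : x = j ⟨y, hyD⟩ := Subtype.ext hxy
      rw [hx]
      exact (hh ⟨y, hyD⟩).symm
    let S := E.toLinearPMap.sup P2 compat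
    let Enew : Module.Baer.ExtensionOf Y₁.subtype f :=
      { toLinearPMap := S
        le := le_trans E.le le_sup_left
        is_extension := fun m => by
          rw [E.is_extension m]
          exact (E.toLinearPMap.left_le_sup P2 compat).2 rfl }
    have hEle : E ≤ Enew := E.toLinearPMap.left_le_sup P2 compat
    have heq := Module.Baer.extensionOfMax_is_max Y₁.subtype f Enew hEle
    have hd : E.domain ⊔ M i = E.domain := congrArg (fun e => e.domain) heq
    exact le_sup_right.trans hd.le
  have htop : E.domain = ⊤ := eq_top_iff.mpr (by rw [← hsup]; exact iSup_le key)
  refine ⟨{ toFun := fun y => E.toLinearPMap ⟨y, htop.symm ▸ trivial⟩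
            map_add' := fun x y => by rw [← LinearPMap.map_add]; congr
            map_smul' := fun r x => by rw [← LinearPMap.map_smul]; dsimp }, fun y => ?_⟩
  exact (E.is_extension y).symm

end Helpers

/-- If a right `A`-module `X` is injective with respect to a right ideal `B`,
then `X` is injective with respect to the two-sided ideal `AB` generated by `B`; moreover, if
`AB` contains a finite subset `C` with zero right annihilator, then `X` is injective. -/
theorem stmt0 (A : Type u) [Ring A] (X : Type v) [AddCommGroup X] [Module Aᵐᵒᵖ X]
    (B : Submodule Aᵐᵒᵖ A) (hB : IsInjectiveWrt Aᵐᵒᵖ X ↥B)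
    (AB : Submodule Aᵐᵒᵖ A)
    (hAB : ∀ x : A, x ∈ AB ↔ x ∈ TwoSidedIdeal.span (B : Set A)) :
    IsInjectiveWrt Aᵐᵒᵖ X ↥AB ∧
      ((∃ C : Finset A, (C : Set A) ⊆ (AB : Set A) ∧
          ∀ a : A, (∀ c ∈ C, c * a = 0) → a = 0) →
        Module.Injective Aᵐᵒᵖ X) := by
  classical
  -- left multiplication by `a` as an `Aᵐᵒᵖ`-linear map
  let L : A → (A →ₗ[Aᵐᵒᵖ] A) := fun a =>
    { toFun := fun x => a * x
      map_add' := mul_add a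
      map_smul' := fun c x => by
        simp only [MulOpposite.smul_eq_mul_unop, RingHom.id_apply, mul_assoc] }
  have hmemAB : ∀ (a b : A), b ∈ B → a * b ∈ AB := by
    intro a b hb
    rw [hAB]
    exact TwoSidedIdeal.mul_mem_left _ a b (TwoSidedIdeal.subset_span hb)
  let F : A → (↥B →ₗ[Aᵐᵒᵖ] ↥AB) := fun a =>
    LinearMap.codRestrict AB ((L a).comp B.subtype) (fun b => hmemAB a b b.2)
  let M : A → Submodule Aᵐᵒᵖ ↥AB := fun a => LinearMap.range (F a)
  -- the submodules `M a` (images of `b ↦ a * b`) fill up `AB`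
  have hsup : ⨆ a, M a = ⊤ := by
    apply Submodule.map_injective_of_injective AB.injective_subtype
    rw [Submodule.map_iSup, Submodule.map_top, Submodule.range_subtype]
    have hma : ∀ a, (M a).map AB.subtype = B.map (L a) := by
      intro a
      show Submodule.map AB.subtype (LinearMap.range (F a)) = B.map (L a)
      rw [← LinearMap.range_comp, show AB.subtype ∘ₗ F a = (L a).comp B.subtype from
          LinearMap.subtype_comp_codRestrict _ _ _,
        LinearMap.range_comp, Submodule.range_subtype]
    simp_rw [hma]
    -- now show `⨆ a, B.map (L a) = AB`
    apply le_antisymm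
    · exact iSup_le fun a => Submodule.map_le_iff_le_comap.mpr fun b hb => hmemAB a b hb
    · intro x hx
      rw [hAB, TwoSidedIdeal.mem_span_iff] at hx
      set S : Submodule Aᵐᵒᵖ A := ⨆ a, B.map (L a) with hS
      have hmull : ∀ {y z : A}, z ∈ S → y * z ∈ S := by
        intro y z hz
        refine Submodule.iSup_induction (motive := fun z => y * z ∈ S) _ hz ?_ ?_ ?_
        · rintro a _ ⟨b, hb, rfl⟩
          refine Submodule.mem_iSup_of_mem (y * a) ⟨b, hb, ?_⟩
          show y * a * b = y * (a * b); rw [mul_assoc]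
        · simp
        · intro u v hu hv
          rw [mul_add]; exact S.add_mem hu hv
      let T : TwoSidedIdeal A := TwoSidedIdeal.mk' (S : Set A) S.zero_mem
        (fun h1 h2 => S.add_mem h1 h2) (fun h1 => S.neg_mem h1)
        (fun h1 => hmull h1) (fun {y z} h1 => S.smul_mem (op z) h1)
      have := hx T (fun b hb => by
        rw [SetLike.mem_coe, TwoSidedIdeal.mem_mk']
        exact Submodule.mem_iSup_of_mem 1 ⟨b, hb, one_mul b⟩)
      rwa [TwoSidedIdeal.mem_mk'] at this
  have part1 : IsInjectiveWrt Aᵐᵒᵖ X ↥AB := by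
    refine isInjWrt_of_iSup_eq_top M hsup fun a => ?_
    exact isInjWrt_of_surjective (F a).rangeRestrict (LinearMap.surjective_rangeRestrict _) hB
  refine ⟨part1, ?_⟩
  rintro ⟨C, hC1, hC2⟩
  -- the embedding `A → (C → AB)`, `a ↦ (c * a)_c`
  let φ : A →ₗ[Aᵐᵒᵖ] ({c // c ∈ C} → ↥AB) :=
    { toFun := fun a c => ⟨c.1 * a, AB.smul_mem (op a) (hC1 c.2)⟩
      map_add' := fun x y => funext fun c => Subtype.ext (mul_add _ _ _)
      map_smul' := fun d a => funext fun c => Subtype.ext (by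
        simp only [MulOpposite.smul_eq_mul_unop, RingHom.id_apply, Pi.smul_apply,
          Submodule.coe_smul, mul_assoc]) }
  have hφ : Function.Injective φ := by
    intro a b hab
    rw [← sub_eq_zero]
    apply hC2
    intro c hc
    have h1 := congrFun hab ⟨c, hc⟩
    have h2 : c * a = c * b := congrArg Subtype.val h1
    rw [mul_sub, h2, sub_self]
  -- `X` is injective relative to the finite power of `AB`
  have hPi : IsInjectiveWrt Aᵐᵒᵖ X ({c // c ∈ C} → ↥AB) := by
    refine isInjWrt_of_iSup_eq_top
      (fun c => LinearMap.range (LinearMap.single Aᵐᵒᵖ (fun _ => ↥AB) c)) ?_ ?_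
    · rw [eq_top_iff]
      intro y _
      rw [← Finset.univ_sum_single y]
      exact Submodule.sum_mem _ fun c _ => Submodule.mem_iSup_of_mem c ⟨y c, rfl⟩
    · exact fun c => isInjWrt_of_surjective (LinearMap.single Aᵐᵒᵖ (fun _ => ↥AB) c).rangeRestrict
        (LinearMap.surjective_rangeRestrict _) part1
  have hA : IsInjectiveWrt Aᵐᵒᵖ X A :=
    isInjWrt_of_equiv (LinearEquiv.ofInjective φ hφ).symm
      (isInjWrt_submodule (LinearMap.range φ) hPi)
  -- transfer across `A ≃ₗ[Aᵐᵒᵖ] Aᵐᵒᵖ` and apply Baer's criterion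
  let e2 : A ≃ₗ[Aᵐᵒᵖ] Aᵐᵒᵖ :=
    { MulOpposite.opAddEquiv with
      map_smul' := fun c a => rfl }
  have hAop : IsInjectiveWrt Aᵐᵒᵖ X Aᵐᵒᵖ := isInjWrt_of_equiv e2 hA
  have baer : Module.Baer Aᵐᵒᵖ X := by
    intro I g
    obtain ⟨g', hg'⟩ := hAop I g
    exact ⟨g', fun x mem => hg' ⟨x, mem⟩⟩
  exact baer.injective
end

section
/- Let A be a ring and X a right A-module with X ≠ G(X). Then there exists a non-zero right ideal B of A such that the module B_A is isomorphic to a submodule of X. -/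
open MulOpposite

open MulOpposite

/-- If `X ≠ G(X)`, then some non-zero right ideal `B` of `A` is isomorphic to a
submodule of `X` (i.e. embeds in `X`). -/
theorem stmt1 (A : Type u) [Ring A] (X : Type v) [AddCommGroup X] [Module Aᵐᵒᵖ X]
    (hX : goldieRadical A X ≠ ⊤) :
    ∃ B : Submodule Aᵐᵒᵖ A, B ≠ ⊥ ∧ ∃ f : B →ₗ[Aᵐᵒᵖ] X, Function.Injective f := by
  -- Since the Goldie radical is not ⊤, some Y ≠ ⊤ has X/Y nonsingular.
  have hY : ∃ Y ∈ {Y : Submodule Aᵐᵒᵖ X | IsNonsingularMod A (X ⧸ Y)}, Y ≠ ⊤ := by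
    by_contra h
    push_neg at h
    exact hX (sInf_eq_top.mpr h)
  obtain ⟨Y, hns, hYne⟩ := hY
  -- pick x ∉ Y
  have hx : ∃ x : X, x ∉ Y := by
    by_contra h
    push_neg at h
    exact hYne (Submodule.eq_top_iff'.mpr h)
  obtain ⟨x, hxY⟩ := hx
  set xb : X ⧸ Y := Submodule.Quotient.mk x with hxb
  have hxb0 : xb ≠ 0 := by
    simpa [hxb, Submodule.Quotient.mk_eq_zero] using hxY
  -- rightAnn of xb is not essential
  have hness : ¬ IsEssentialRightIdeal A (rightAnn A xb) := fun h => hxb0 (hns xb h)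
  unfold IsEssentialRightIdeal at hness
  push_neg at hness
  obtain ⟨C, hC0, hCint⟩ := hness
  refine ⟨C, hC0, ?_⟩
  -- the map c ↦ op c • x
  refine ⟨{ toFun := fun c => op (c : A) • x
            map_add' := by
              intro a b
              simp [op_add, add_smul]
            map_smul' := by
              intro m a
              have h1 : ((m • a : C) : A) = (a : A) * m.unop := rfl
              have h2 : op ((a : A) * m.unop) = m * op (a : A) := by
                simp [MulOpposite.op_mul]
              simp only [h1, h2, mul_smul, RingHom.id_apply] }, ?_⟩
  intro a b hab
  have hsub : op ((a : A) - (b : A)) • x = 0 := by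
    simp only [LinearMap.coe_mk, AddHom.coe_mk] at hab
    rw [op_sub, sub_smul, hab, sub_self]
  have hmem : ((a : A) - (b : A)) ∈ rightAnn A xb ⊓ C := by
    constructor
    · show op ((a : A) - (b : A)) • xb = 0
      rw [hxb, ← Submodule.Quotient.mk_smul, hsub, Submodule.Quotient.mk_zero]
    · exact sub_mem a.2 b.2
  rw [hCint] at hmem
  exact Subtype.ext (sub_eq_zero.mp ((Submodule.mem_bot _).mp hmem))
end

section
/- Let A be a ring, X and Y right A-modules, {Y_i}_{i∈I} a family of right A-modules such that X is injective with respect to Y_i for each i ∈ I, and {f_i : Y_i → Y}_{i∈I} a family of homomorphisms. Then X is injective with respect to the submodule Σ_{i∈I} f_i(Y_i) of Y. Moreover, if there exists a monomorphism A_A → Σ_{i∈I} f_i(Y_i), then the module X is injective. -/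
open MulOpposite

open MulOpposite

section StmtAux
section Aux
variable {R : Type*} [Ring R] {X : Type*} [AddCommGroup X] [Module R X]

lemma injWrt_of_surj {M N : Type*} [AddCommGroup M] [Module R M] [AddCommGroup N] [Module R N]
    (hM : IsInjectiveWrt R X M) (e : M →ₗ[R] N) (he : Function.Surjective e) :
    IsInjectiveWrt R X N := by
  intro N₁ f
  obtain ⟨g, hg⟩ := hM (N₁.comap e) (f.comp (e.restrict (fun m hm => hm)))
  have hker : LinearMap.ker e ≤ LinearMap.ker g := by
    intro m hm
    have hm' : m ∈ N₁.comap e := by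
      simp only [Submodule.mem_comap]
      rw [show e m = 0 from hm]; exact N₁.zero_mem
    have := hg ⟨m, hm'⟩
    simp only [LinearMap.mem_ker]
    rw [show g m = g ((⟨m, hm'⟩ : N₁.comap e) : M) from rfl, this]
    have : e.restrict (p := N₁.comap e) (q := N₁) (fun m hm => hm) ⟨m, hm'⟩ = 0 := by
      apply Subtype.ext
      simpa using hm
    rw [LinearMap.comp_apply, this, map_zero]
  let h : N →ₗ[R] X :=
    ((LinearMap.ker e).liftQ g hker).comp (e.quotKerEquivOfSurjective he).symm.toLinearMap
  have hcomp : ∀ m : M, h (e m) = g m := by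
    intro m
    have h1 : (e.quotKerEquivOfSurjective he).symm (e m) = Submodule.Quotient.mk m := by
      apply (e.quotKerEquivOfSurjective he).injective
      rw [LinearEquiv.apply_symm_apply]
      rfl
    simp only [h, LinearMap.comp_apply, LinearEquiv.coe_coe, h1]
    rfl
  refine ⟨h, fun y => ?_⟩
  obtain ⟨m, hm⟩ := he (y : N)
  have hm' : m ∈ N₁.comap e := by simp only [Submodule.mem_comap]; rw [hm]; exact y.2
  rw [show ((y : N)) = e m from hm.symm, hcomp m, hg ⟨m, hm'⟩, LinearMap.comp_apply]
  congr 1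
  apply Subtype.ext
  simpa using hm

lemma injWrt_of_inj {M N : Type*} [AddCommGroup M] [Module R M] [AddCommGroup N] [Module R N]
    (hN : IsInjectiveWrt R X N) (e : M →ₗ[R] N) (he : Function.Injective e) :
    IsInjectiveWrt R X M := by
  intro M₁ f
  let eq := Submodule.equivMapOfInjective e he M₁
  obtain ⟨g, hg⟩ := hN (M₁.map e) (f.comp eq.symm.toLinearMap)
  refine ⟨g.comp e, fun m => ?_⟩
  have hmem : e (m : M) ∈ M₁.map e := ⟨m, m.2, rfl⟩
  rw [LinearMap.comp_apply, show g (e (m : M)) = g ((⟨e m, hmem⟩ : M₁.map e) : N) from rfl,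
    hg ⟨e m, hmem⟩]
  simp only [LinearMap.comp_apply, LinearEquiv.coe_coe]
  congr 1
  apply eq.injective
  rw [LinearEquiv.apply_symm_apply]
  apply Subtype.ext
  rfl

end Aux

section Sup
variable {R : Type*} [Ring R] {X : Type*} [AddCommGroup X] [Module R X]
variable {Y : Type*} [AddCommGroup Y] [Module R Y]

lemma injWrt_iSup {ι : Type*} (N : ι → Submodule R Y)
    (hN : ∀ i, IsInjectiveWrt R X ↥(N i)) :
    IsInjectiveWrt R X ↥(⨆ i, N i) := by
  unfold IsInjectiveWrt
  set Mb : Submodule R Y := ⨆ i, N i with hMb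
  intro M₁ f
  haveI : Fact (Function.Injective M₁.subtype) := ⟨Subtype.val_injective⟩
  set E := Module.Baer.extensionOfMax M₁.subtype f with hE
  have key : ∀ j, Submodule.comap Mb.subtype (N j) ≤ E.domain := by
    intro j
    have hNjle : N j ≤ Mb := le_iSup N j
    set Nj' : Submodule R ↥Mb := Submodule.comap Mb.subtype (N j) with hNj'
    set S : Submodule R ↥(N j) :=
      Submodule.comap (N j).subtype (Submodule.map Mb.subtype E.domain) with hS
    let toDom : ↥S →ₗ[R] ↥E.domain :=
      { toFun := fun s => ⟨⟨((s : ↥(N j)) : Y), hNjle (s : ↥(N j)).2⟩, by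
          obtain ⟨z, hz, hzz⟩ := s.2
          have hzeq : (⟨((s : ↥(N j)) : Y), hNjle (s : ↥(N j)).2⟩ : ↥Mb) = z :=
            Subtype.ext hzz.symm
          rw [hzeq]; exact hz⟩
        map_add' := fun a b => Subtype.ext (Subtype.ext rfl)
        map_smul' := fun c a => Subtype.ext (Subtype.ext rfl) }
    let h : ↥S →ₗ[R] X := E.toLinearPMap.toFun.comp toDom
    obtain ⟨g', hg'⟩ := hN j S h
    let ofNj : ↥Nj' →ₗ[R] ↥(N j) :=
      { toFun := fun n => ⟨((n : ↥Mb) : Y), n.2⟩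
        map_add' := fun a b => Subtype.ext rfl
        map_smul' := fun c a => Subtype.ext rfl }
    let F₂ : LinearPMap (RingHom.id R) ↥Mb X := ⟨Nj', g'.comp ofNj⟩
    have hcompat : ∀ (x : ↥E.domain) (y : ↥F₂.domain),
        ((x : ↥Mb) : ↥Mb) = (y : ↥Mb) → E.toLinearPMap x = F₂ y := by
      intro x y hxy
      have hmemS : (⟨((y : ↥Mb) : Y), y.2⟩ : ↥(N j)) ∈ S := by
        refine ⟨(x : ↥Mb), x.2, ?_⟩
        simp only [Submodule.coe_subtype]
        exact congrArg Subtype.val hxy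
      have h1 : F₂ y = g' ⟨((y : ↥Mb) : Y), y.2⟩ := rfl
      have h2 : g' ((⟨⟨((y : ↥Mb) : Y), y.2⟩, hmemS⟩ : ↥S) : ↥(N j)) =
          h ⟨⟨((y : ↥Mb) : Y), y.2⟩, hmemS⟩ := hg' _
      have h3 : toDom ⟨⟨((y : ↥Mb) : Y), y.2⟩, hmemS⟩ = x :=
        Subtype.ext (Subtype.ext (congrArg Subtype.val hxy).symm)
      rw [h1, h2]
      show E.toLinearPMap x = E.toLinearPMap.toFun (toDom ⟨⟨((y : ↥Mb) : Y), y.2⟩, hmemS⟩)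
      rw [h3]
      rfl
    let F : LinearPMap (RingHom.id R) ↥Mb X := E.toLinearPMap.sup F₂ hcompat
    have hEleF : E.toLinearPMap ≤ F := E.toLinearPMap.left_le_sup F₂ hcompat
    let a : Module.Baer.ExtensionOf M₁.subtype f :=
      { toLinearPMap := F
        le := E.le.trans hEleF.1
        is_extension := fun m => (E.is_extension m).trans (hEleF.2 rfl) }
    have haE : a = E := Module.Baer.extensionOfMax_is_max M₁.subtype f a hEleF
    have hdomeq : F.domain = E.domain := congrArg (fun z : Module.Baer.ExtensionOf M₁.subtype f => z.domain) haE
    calc Nj' ≤ E.toLinearPMap.domain ⊔ Nj' := le_sup_right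
      _ = F.domain := rfl
      _ = E.domain := hdomeq
  have hdom : E.domain = ⊤ := by
    have hle : Mb ≤ Submodule.map Mb.subtype E.domain := by
      show (⨆ i, N i) ≤ Submodule.map Mb.subtype E.domain
      refine iSup_le fun j y hy => ?_
      exact ⟨⟨y, le_iSup N j hy⟩, key j hy, rfl⟩
    rw [eq_top_iff]
    intro y _
    obtain ⟨z, hz, hzz⟩ := hle y.2
    rwa [show y = z from Subtype.ext hzz.symm]
  let top : ↥Mb →ₗ[R] ↥E.domain :=
    { toFun := fun y => ⟨y, hdom.symm ▸ Submodule.mem_top⟩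
      map_add' := fun a b => Subtype.ext rfl
      map_smul' := fun c a => Subtype.ext rfl }
  refine ⟨E.toLinearPMap.toFun.comp top, fun y => ?_⟩
  have h1 := E.is_extension y
  rw [LinearMap.comp_apply]
  rw [h1]
  rfl

end Sup

end StmtAux

/-- The `unop` map as an `Aᵐᵒᵖ`-linear map from `Aᵐᵒᵖ` to `A`. -/
def unopLinearMap (A : Type*) [Ring A] : Aᵐᵒᵖ →ₗ[Aᵐᵒᵖ] A where
  toFun := MulOpposite.unop
  map_add' := fun _ _ => rfl
  map_smul' := fun _ _ => rfl

/-- If `X` is injective with respect to each module `Y i` and `f i : Y i →ₗ Y`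
is a family of homomorphisms, then `X` is injective with respect to the submodule
`Σᵢ fᵢ(Yᵢ)` of `Y`; moreover, if `A_A` embeds into `Σᵢ fᵢ(Yᵢ)`, then `X` is injective. -/
theorem stmt2 (A : Type u) [Ring A] (X : Type v) [AddCommGroup X] [Module Aᵐᵒᵖ X]
    (Y : Type w) [AddCommGroup Y] [Module Aᵐᵒᵖ Y]
    {I : Type z} (Yi : I → Type w') [∀ i, AddCommGroup (Yi i)] [∀ i, Module Aᵐᵒᵖ (Yi i)]
    (hX : ∀ i, IsInjectiveWrt Aᵐᵒᵖ X (Yi i))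
    (f : ∀ i, Yi i →ₗ[Aᵐᵒᵖ] Y) :
    IsInjectiveWrt Aᵐᵒᵖ X ↥(⨆ i, LinearMap.range (f i)) ∧
      ((∃ g : A →ₗ[Aᵐᵒᵖ] ↥(⨆ i, LinearMap.range (f i)), Function.Injective g) →
        Module.Injective Aᵐᵒᵖ X) := by
  have hrange : ∀ i, IsInjectiveWrt Aᵐᵒᵖ X ↥(LinearMap.range (f i)) := fun i =>
    injWrt_of_surj (hX i) (f i).rangeRestrict (f i).surjective_rangeRestrict
  have part1 := injWrt_iSup (fun i => LinearMap.range (f i)) hrange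
  refine ⟨part1, ?_⟩
  rintro ⟨g, hg⟩
  have hA : IsInjectiveWrt Aᵐᵒᵖ X A := injWrt_of_inj part1 g hg
  have hAop : IsInjectiveWrt Aᵐᵒᵖ X Aᵐᵒᵖ :=
    injWrt_of_inj hA (unopLinearMap A) (fun _ _ h => MulOpposite.unop_injective h)
  exact Module.Baer.injective (fun J k => by
    obtain ⟨k', hk'⟩ := hAop J k
    exact ⟨k', fun x mem => hk' ⟨x, mem⟩⟩)
end

section
/- Let A be a ring, X and Y right A-modules, and {Y_i}_{i∈I} a family of submodules of Y such that X is injective with respect to Y_i for each i ∈ I. Then X is injective with respect to the submodule Σ_{i∈I} Y_i of Y. Moreover, if there exists a monomorphism A_A → Σ_{i∈I} Y_i, then the module X is injective. -/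
open MulOpposite

open MulOpposite

/-- transfer along an injective linear map -/
theorem isInjWrt_of_inj {R : Type*} [Ring R] {X : Type*} [AddCommGroup X] [Module R X]
    {N : Type*} [AddCommGroup N] [Module R N] {M : Type*} [AddCommGroup M] [Module R M]
    (e : N →ₗ[R] M) (he : Function.Injective e) (h : IsInjectiveWrt R X M) :
    IsInjectiveWrt R X N := by
  intro N₁ f
  obtain ⟨g, hg⟩ := h (N₁.map e)
    (f.comp (Submodule.equivMapOfInjective e he N₁).symm.toLinearMap)
  refine ⟨g.comp e, fun y => ?_⟩
  have h1 := hg (Submodule.equivMapOfInjective e he N₁ y)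
  simp only [LinearMap.comp_apply, LinearEquiv.coe_coe, LinearEquiv.symm_apply_apply] at h1
  have h2 : ((Submodule.equivMapOfInjective e he N₁ y : N₁.map e) : M) = e y := rfl
  simp only [LinearMap.comp_apply]
  rw [← h2]
  exact h1

theorem isInjWrt_iSup {R : Type*} [Ring R] {X : Type*} [AddCommGroup X] [Module R X]
    {M : Type*} [AddCommGroup M] [Module R M] {I : Type*} (Ni : I → Submodule R M)
    (htop : (⨆ i, Ni i) = ⊤) (hX : ∀ i, IsInjectiveWrt R X ↥(Ni i)) :
    IsInjectiveWrt R X M := by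
  intro Y₁ f
  set f' : M →ₗ.[R] X := ⟨Y₁, f⟩ with hf'
  set S : Set (M →ₗ.[R] X) := {g | f' ≤ g} with hS
  have hfS : f' ∈ S := by
    show f' ≤ f'
    exact le_rfl
  obtain ⟨g, hfg, hgS, hmax⟩ := zorn_le_nonempty₀ S
    (fun c hcS hchain y hyc => by
      refine ⟨LinearPMap.sSup c hchain.directedOn, ?_, fun z hz => LinearPMap.le_sSup _ hz⟩
      exact le_trans (hcS hyc) (LinearPMap.le_sSup _ hyc)) f' hfS
  -- claim: each Ni i ≤ g.domain
  have hNi : ∀ i, Ni i ≤ g.domain := by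
    intro i
    set D := g.domain with hD
    set K : Submodule R ↥(Ni i) := D.comap (Ni i).subtype with hK
    set φ : K →ₗ[R] X :=
      g.toFun.comp (LinearMap.codRestrict D ((Ni i).subtype.comp K.subtype) (fun x => x.2))
      with hφ
    obtain ⟨ψ, hψ⟩ := hX i K φ
    set l : (↥D × ↥(Ni i)) →ₗ[R] X := g.toFun.coprod ψ with hl
    set π : (↥D × ↥(Ni i)) →ₗ[R] M := D.subtype.coprod (Ni i).subtype with hπ
    have hrange : LinearMap.range π = D ⊔ Ni i := by
      rw [hπ, LinearMap.range_coprod, Submodule.range_subtype, Submodule.range_subtype]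
    set π' : (↥D × ↥(Ni i)) →ₗ[R] ↥(D ⊔ Ni i) :=
      π.codRestrict (D ⊔ Ni i) (fun p => by rw [← hrange]; exact LinearMap.mem_range_self π p)
      with hπ'
    have hsurj : Function.Surjective π' := by
      rintro ⟨z, hz⟩
      rw [← hrange] at hz
      obtain ⟨p, hp⟩ := hz
      exact ⟨p, Subtype.ext hp⟩
    have hker : LinearMap.ker π' ≤ LinearMap.ker l := by
      rintro ⟨d, n⟩ hp
      have h0 : (d : M) + (n : M) = 0 := by
        have := congrArg (Subtype.val) (hp : π' (d, n) = 0)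
        simpa [hπ', hπ] using this
      have hcoe : ((-n : ↥(Ni i)) : M) = (d : M) := by
        push_cast
        exact neg_eq_of_add_eq_zero_left h0
      have hmem : ((-n : ↥(Ni i)) : M) ∈ D := by
        rw [hcoe]; exact d.2
      have hkmem : (-n : ↥(Ni i)) ∈ K := hmem
      have h1 : ψ (-n : ↥(Ni i)) = φ ⟨-n, hkmem⟩ := hψ ⟨-n, hkmem⟩
      have h2 : φ ⟨-n, hkmem⟩ = g.toFun d := by
        show g.toFun ⟨((-n : ↥(Ni i)) : M), hmem⟩ = g.toFun d
        congr 1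
        exact Subtype.ext hcoe
      show l (d, n) = 0
      have : l (d, n) = g.toFun d + ψ n := rfl
      rw [this, ← h2, ← h1, map_neg]
      exact neg_add_cancel _
    set e := LinearMap.quotKerEquivOfSurjective π' hsurj with he
    set h : ↥(D ⊔ Ni i) →ₗ[R] X :=
      ((LinearMap.ker π').liftQ l hker).comp e.symm.toLinearMap with hh
    have hcalc : ∀ p, h (π' p) = l p := by
      intro p
      have h1 : e (Submodule.Quotient.mk p) = π' p := rfl
      rw [hh, LinearMap.comp_apply, LinearEquiv.coe_coe, ← h1, LinearEquiv.symm_apply_apply]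
      exact Submodule.liftQ_apply _ _ _
    set g'' : M →ₗ.[R] X := ⟨D ⊔ Ni i, h⟩ with hg''
    have hle : g ≤ g'' := by
      refine ⟨le_sup_left, ?_⟩
      rintro x ⟨y, hy⟩ hxy
      have h1 : π' (x, 0) = ⟨y, hy⟩ := by
        apply Subtype.ext
        show (x : M) + ((0 : ↥(Ni i)) : M) = y
        simpa using hxy
      have := hcalc (x, 0)
      rw [h1] at this
      show g.toFun x = h ⟨y, hy⟩
      rw [this]
      show g.toFun x = g.toFun x + ψ 0
      simp
    have hg''S : g'' ∈ S := le_trans (le_trans hfg hle) le_rfl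
    have := hmax hg''S hle
    have hdle : (D ⊔ Ni i : Submodule R M) ≤ D := this.1
    exact le_trans le_sup_right hdle
  have hDtop : g.domain = ⊤ := top_unique (htop ▸ iSup_le hNi)
  set gfin : M →ₗ[R] X :=
    g.toFun.comp (LinearMap.codRestrict g.domain LinearMap.id
      (fun x => by rw [hDtop]; trivial)) with hgfin
  refine ⟨gfin, fun y => ?_⟩
  have h1 := hfg.2 (x := y) (y := ⟨(y : M), hfg.1 y.2⟩) rfl
  show g.toFun ⟨(y : M), _⟩ = f y
  exact h1.symm

def unopLinearAux (A : Type*) [Ring A] : Aᵐᵒᵖ →ₗ[Aᵐᵒᵖ] A where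
  toFun := MulOpposite.unop
  map_add' := fun _ _ => rfl
  map_smul' := fun _ _ => rfl

theorem stmt3_part1 {R : Type*} [Ring R] {X : Type*} [AddCommGroup X] [Module R X]
    {Y : Type*} [AddCommGroup Y] [Module R Y] {I : Type*} (Yi : I → Submodule R Y)
    (hX : ∀ i, IsInjectiveWrt R X ↥(Yi i)) :
    IsInjectiveWrt R X ↥(⨆ i, Yi i) := by
  set M := (⨆ i, Yi i : Submodule R Y) with hM
  set Ni : I → Submodule R ↥M := fun i => (Yi i).comap M.subtype with hNi
  have htop : (⨆ i, Ni i) = ⊤ := by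
    apply Submodule.map_injective_of_injective (Submodule.injective_subtype M)
    rw [Submodule.map_iSup]
    have h1 : ∀ i, Submodule.map M.subtype (Ni i) = Yi i := by
      intro i
      rw [hNi, Submodule.map_comap_subtype]
      exact inf_eq_right.mpr (hM ▸ le_iSup Yi i)
    rw [iSup_congr h1]
    rw [Submodule.map_top, Submodule.range_subtype, hM]
  refine isInjWrt_iSup Ni htop (fun i => ?_)
  exact isInjWrt_of_inj
    ((M.subtype.comp (Ni i).subtype).codRestrict (Yi i) (fun x => x.2))
    (fun a b hab => by
      have h := congrArg Subtype.val hab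
      exact Subtype.ext (Subtype.ext h))
    (hX i)

/-- If `X` is injective with respect to each submodule `Y i` of `Y`, then `X` is
injective with respect to the submodule `Σᵢ Yᵢ` of `Y`; moreover, if `A_A` embeds into
`Σᵢ Yᵢ`, then `X` is injective. -/
theorem stmt3 (A : Type u) [Ring A] (X : Type v) [AddCommGroup X] [Module Aᵐᵒᵖ X]
    (Y : Type w) [AddCommGroup Y] [Module Aᵐᵒᵖ Y]
    {I : Type z} (Yi : I → Submodule Aᵐᵒᵖ Y)
    (hX : ∀ i, IsInjectiveWrt Aᵐᵒᵖ X ↥(Yi i)) :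
    IsInjectiveWrt Aᵐᵒᵖ X ↥(⨆ i, Yi i) ∧
      ((∃ g : A →ₗ[Aᵐᵒᵖ] ↥(⨆ i, Yi i), Function.Injective g) →
        Module.Injective Aᵐᵒᵖ X) := by
  have part1 : IsInjectiveWrt Aᵐᵒᵖ X ↥(⨆ i, Yi i) := stmt3_part1 Yi hX
  refine ⟨part1, ?_⟩
  rintro ⟨g₀, hg₀⟩
  have h1 : IsInjectiveWrt Aᵐᵒᵖ X A := isInjWrt_of_inj g₀ hg₀ part1
  have h2 : IsInjectiveWrt Aᵐᵒᵖ X Aᵐᵒᵖ :=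
    isInjWrt_of_inj (unopLinearAux A) MulOpposite.unop_injective h1
  have hBaer : Module.Baer Aᵐᵒᵖ X := by
    intro J g
    obtain ⟨g', hg'⟩ := h2 J g
    exact ⟨g', fun x mem => hg' ⟨x, mem⟩⟩
  exact hBaer.injective
end

section
/- Let A be a ring, X a non-singular non-zero right A-module, and {C_i : i ∈ I} the set of all non-zero right ideals of A such that no non-zero submodule of the A-module C_i is isomorphic to a submodule of X. Set C = Σ_{i∈I} C_i. Then for any submodule C' of the module C_A, every homomorphism f : C'_A → X is the zero homomorphism. -/
open MulOpposite

open MulOpposite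

section Aux

variable {A : Type u} [Ring A] {X : Type v} [AddCommGroup X] [Module Aᵐᵒᵖ X]

/-- Left multiplication by `d` as a right-`A`-module endomorphism of `A`. -/
def mulLeftOp (d : A) : A →ₗ[Aᵐᵒᵖ] A where
  toFun a := d * a
  map_add' a b := mul_add d a b
  map_smul' c a := by
    show d * (a * c.unop) = (d * a) * c.unop
    rw [mul_assoc]

/-- If `X` is nonsingular and no nonzero submodule of `Ci` embeds in `X`, then every hom from
a submodule of `Ci` to `X` is zero. -/
theorem aux_base (hX : IsNonsingularMod A X) (Ci : Submodule Aᵐᵒᵖ A)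
    (hCi : ∀ D : Submodule Aᵐᵒᵖ A, D ≤ Ci → D ≠ ⊥ →
      ¬∃ f : D →ₗ[Aᵐᵒᵖ] X, Function.Injective f)
    (D : Submodule Aᵐᵒᵖ A) (hD : D ≤ Ci) (g : D →ₗ[Aᵐᵒᵖ] X) : g = 0 := by
  by_contra hg
  obtain ⟨d, hd⟩ : ∃ d : D, g d ≠ 0 := by
    by_contra h
    push_neg at h
    exact hg (LinearMap.ext fun x => by simp [h x])
  have hne : ¬ IsEssentialRightIdeal A (rightAnn A (g d)) := fun h => hd (hX _ h)
  rw [IsEssentialRightIdeal] at hne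
  push_neg at hne
  obtain ⟨B, hB, hBinf⟩ := hne
  -- key : if d * b = 0 with b ∈ B then b = 0
  have hsmul : ∀ b : A, op b • (g d) = g (op b • d) := fun b => (g.map_smul (op b) d).symm
  have key : ∀ b ∈ B, op b • (g d) = 0 → b = 0 := by
    intro b hbB hb0
    have : b ∈ rightAnn A (g d) ⊓ B := ⟨hb0, hbB⟩
    rw [hBinf] at this
    exact this
  -- the submodule E = d * B
  set E : Submodule Aᵐᵒᵖ A := Submodule.map (mulLeftOp (d : A)) B with hE
  have hEmem : ∀ x : A, x ∈ E ↔ ∃ b ∈ B, (d : A) * b = x := by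
    intro x
    simp [hE, Submodule.mem_map, mulLeftOp]
  have hED : E ≤ D := by
    intro x hx
    obtain ⟨b, _, rfl⟩ := (hEmem x).1 hx
    have : op b • (d : A) ∈ D := D.smul_mem (op b) d.2
    simpa using this
  have hECi : E ≤ Ci := le_trans hED hD
  have hEbot : E ≠ ⊥ := by
    intro hEb
    -- then d * b = 0 for all b ∈ B, so B = ⊥
    apply hB
    rw [eq_bot_iff]
    intro b hbB
    have hdb : (d : A) * b ∈ E := (hEmem _).2 ⟨b, hbB, rfl⟩
    rw [hEb, Submodule.mem_bot] at hdb
    have hsd : op b • d = (0 : D) := by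
      apply Subtype.ext
      simpa using hdb
    have : op b • (g d) = 0 := by rw [hsmul, hsd, map_zero]
    exact key b hbB this
  -- embedding of E in X
  refine hCi E hECi hEbot ⟨g.comp (Submodule.inclusion hED), ?_⟩
  rw [← LinearMap.ker_eq_bot, eq_bot_iff]
  rintro ⟨x, hxE⟩ hx
  have hgx : g ⟨x, hED hxE⟩ = 0 := hx
  obtain ⟨b, hbB, hbx⟩ := (hEmem x).1 hxE
  have hxd : (⟨x, hED hxE⟩ : D) = op b • d := by
    apply Subtype.ext
    simpa using hbx.symm
  have : op b • (g d) = 0 := by rw [hsmul, ← hxd, hgx]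
  have hb0 : b = 0 := key b hbB this
  have : x = 0 := by rw [← hbx, hb0, mul_zero]
  simpa using this

/-- The hom-vanishing property is closed under binary suprema. -/
theorem aux_sup (M N : Submodule Aᵐᵒᵖ A)
    (hM : ∀ D : Submodule Aᵐᵒᵖ A, D ≤ M → ∀ g : D →ₗ[Aᵐᵒᵖ] X, g = 0)
    (hN : ∀ D : Submodule Aᵐᵒᵖ A, D ≤ N → ∀ g : D →ₗ[Aᵐᵒᵖ] X, g = 0) :
    ∀ D : Submodule Aᵐᵒᵖ A, D ≤ M ⊔ N → ∀ g : D →ₗ[Aᵐᵒᵖ] X, g = 0 := by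
  intro D hD g
  -- g vanishes on D ⊓ M
  have hres : g.comp (Submodule.inclusion (inf_le_left : D ⊓ M ≤ D)) = 0 :=
    hM (D ⊓ M) inf_le_right _
  have hker : Submodule.comap D.subtype (D ⊓ M) ≤ LinearMap.ker g := by
    rintro ⟨x, hxD⟩ hx
    have hxDM : x ∈ D ⊓ M := hx
    have := congrFun (congrArg (fun (h : _ →ₗ[Aᵐᵒᵖ] X) => h.toFun) hres) ⟨x, hxDM⟩
    exact this
  -- induced map on the quotient, transported through the second iso theorem
  set gbar := (Submodule.comap D.subtype (D ⊓ M)).liftQ g hker with hgbar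
  set e := LinearMap.quotientInfEquivSupQuotient D M with he
  set h := gbar.comp e.symm.toLinearMap with hh
  set π := (Submodule.comap (D ⊔ M).subtype M).mkQ with hπ
  -- the restriction of h ∘ π to N ⊓ (D ⊔ M) is zero by hN
  have hφ : (h.comp π).comp
      (Submodule.inclusion (inf_le_right : N ⊓ (D ⊔ M) ≤ D ⊔ M)) = 0 :=
    hN (N ⊓ (D ⊔ M)) inf_le_left _
  -- computation: for x ∈ D, g x = h (π x)
  have hcomp : ∀ (x : A) (hxD : x ∈ D),
      h (π ⟨x, le_sup_left (a := D) (b := M) hxD⟩) = g ⟨x, hxD⟩ := by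
    intro x hxD
    have hsymm := LinearMap.quotientInfEquivSupQuotient_symm_apply_left D M
      ⟨x, le_sup_left (a := D) (b := M) hxD⟩ hxD
    show gbar (e.symm (Submodule.Quotient.mk _)) = g ⟨x, hxD⟩
    rw [hsymm]
    exact Submodule.liftQ_apply _ g ⟨x, hxD⟩
  -- now prove g = 0
  ext ⟨x, hxD⟩
  have hxMN : x ∈ M ⊔ N := hD hxD
  obtain ⟨m, hm, n, hn, hmn⟩ := Submodule.mem_sup.1 hxMN
  have hnDM : n ∈ D ⊔ M := by
    have hxDM : x ∈ D ⊔ M := le_sup_left (a := D) (b := M) hxD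
    have hmDM : m ∈ D ⊔ M := le_sup_right (a := D) (b := M) hm
    have : x - m ∈ D ⊔ M := Submodule.sub_mem _ hxDM hmDM
    rwa [show x - m = n by rw [← hmn]; abel] at this
  have hπm : π ⟨m, le_sup_right (a := D) (b := M) hm⟩ = 0 := by
    rw [hπ, Submodule.mkQ_apply, Submodule.Quotient.mk_eq_zero]
    exact hm
  have hπn : h (π ⟨n, hnDM⟩) = 0 := by
    have := congrFun (congrArg (fun (φ : _ →ₗ[Aᵐᵒᵖ] X) => φ.toFun) hφ) ⟨n, ⟨hn, hnDM⟩⟩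
    exact this
  have hsplit : (⟨x, le_sup_left (a := D) (b := M) hxD⟩ : (D ⊔ M : Submodule Aᵐᵒᵖ A))
      = ⟨m, le_sup_right (a := D) (b := M) hm⟩ + ⟨n, hnDM⟩ := by
    apply Subtype.ext
    simp [hmn]
  have : g ⟨x, hxD⟩ = 0 := by
    rw [← hcomp x hxD, hsplit, map_add, map_add, hπm, map_zero, zero_add, hπn]
  simpa using this

end Aux

/-- Let `X` be a non-singular non-zero right `A`-module and let `C` be the sum of
all non-zero right ideals of `A` having no non-zero submodule isomorphic to a submodule of `X`.
Then every homomorphism from a submodule of `C_A` to `X` is zero. -/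
theorem stmt4 (A : Type u) [Ring A] (X : Type v) [AddCommGroup X] [Module Aᵐᵒᵖ X]
    [Nontrivial X] (hX : IsNonsingularMod A X)
    (C : Submodule Aᵐᵒᵖ A)
    (hC : C = sSup {Ci : Submodule Aᵐᵒᵖ A | Ci ≠ ⊥ ∧
      ∀ D : Submodule Aᵐᵒᵖ A, D ≤ Ci → D ≠ ⊥ →
        ¬∃ f : D →ₗ[Aᵐᵒᵖ] X, Function.Injective f}) :
    ∀ C' : Submodule Aᵐᵒᵖ A, C' ≤ C → ∀ f : C' →ₗ[Aᵐᵒᵖ] X, f = 0 := by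
  intro C' hC' f
  set S := {Ci : Submodule Aᵐᵒᵖ A | Ci ≠ ⊥ ∧
      ∀ D : Submodule Aᵐᵒᵖ A, D ≤ Ci → D ≠ ⊥ →
        ¬∃ f : D →ₗ[Aᵐᵒᵖ] X, Function.Injective f} with hS
  have key : ∀ s : Finset (Submodule Aᵐᵒᵖ A), ↑s ⊆ S →
      ∀ D : Submodule Aᵐᵒᵖ A, D ≤ (⨆ i ∈ s, i) → ∀ g : D →ₗ[Aᵐᵒᵖ] X, g = 0 := by
    classical
    intro s
    induction s using Finset.induction_on with
    | empty =>
      intro _ D hD g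
      rw [show (⨆ i ∈ (∅ : Finset (Submodule Aᵐᵒᵖ A)), i) = ⊥ by simp] at hD
      ext x
      have hx0 : (x : A) = 0 := by
        have := hD x.2
        simpa using this
      have : x = 0 := Subtype.ext hx0
      rw [this, map_zero]
      rfl
    | @insert a s ha ih =>
      intro hsub D hD g
      rw [show (⨆ i ∈ insert a s, i) = a ⊔ (⨆ i ∈ s, (i : Submodule Aᵐᵒᵖ A)) by
        rw [Finset.iSup_insert]] at hD
      have haS : a ∈ S := hsub (Finset.mem_insert_self a s)
      have hsS : ↑s ⊆ S := fun x hx => hsub (Finset.mem_insert_of_mem hx)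
      exact aux_sup a _ (aux_base hX a haS.2) (ih hsS) D hD g
  ext x
  have hxC : (x : A) ∈ C := hC' x.2
  rw [hC] at hxC
  obtain ⟨s, hsS, hxs⟩ := Submodule.mem_sSup_iff_exists_finset.1 hxC
  have hg : f.comp (Submodule.inclusion (inf_le_left : C' ⊓ (⨆ i ∈ s, i) ≤ C')) = 0 :=
    key s hsS (C' ⊓ (⨆ i ∈ s, i)) inf_le_right _
  have := congrFun (congrArg (fun (φ : _ →ₗ[Aᵐᵒᵖ] X) => φ.toFun) hg)
    ⟨(x : A), ⟨x.2, hxs⟩⟩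
  exact this
end

section
/- Let A be a ring, X a non-singular non-zero right A-module, and {C_i : i ∈ I} the set of all non-zero right ideals of A such that no non-zero submodule of the A-module C_i is isomorphic to a submodule of X. Set C = Σ_{i∈I} C_i. Then X is injective with respect to the module C_A. -/
open MulOpposite

open MulOpposite

section Aux

variable {A : Type u} [Ring A] {X : Type v} [AddCommGroup X] [Module Aᵐᵒᵖ X]

/-- right multiplication by `m`, as a linear map. -/
def lmulAux {M : Type w} [AddCommGroup M] [Module Aᵐᵒᵖ M] (m : M) : A →ₗ[Aᵐᵒᵖ] M where
  toFun a := op a • m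
  map_add' a b := by show op (a + b) • m = op a • m + op b • m; rw [op_add, add_smul]
  map_smul' c a := by
    have h1 : c • a = a * c.unop := rfl
    have h2 : op (a * c.unop) = c * op a := by simp [MulOpposite.op_mul]
    simp only [RingHom.id_apply]
    rw [h1, h2, mul_smul]

theorem rightAnn_defAux {A : Type u} [Ring A] {X : Type v} [AddCommGroup X] [Module Aᵐᵒᵖ X]
    (x : X) (a : A) : a ∈ rightAnn A x ↔ op a • x = 0 := Iff.rfl

theorem essKerZero {M : Type w} [AddCommGroup M] [Module Aᵐᵒᵖ M]
    (hX : IsNonsingularMod A X) (g : M →ₗ[Aᵐᵒᵖ] X)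
    (hess : ∀ K : Submodule Aᵐᵒᵖ M, K ≠ ⊥ → LinearMap.ker g ⊓ K ≠ ⊥) :
    g = 0 := by
  ext m
  simp only [LinearMap.zero_apply]
  apply hX
  intro J hJ
  by_cases h : Submodule.map (lmulAux m) J = ⊥
  · have hle : J ≤ rightAnn A (g m) := by
      intro a ha
      have : lmulAux m a ∈ Submodule.map (lmulAux m) J := Submodule.mem_map_of_mem ha
      rw [h, Submodule.mem_bot] at this
      have h0 : op a • m = 0 := this
      show op a • g m = 0
      rw [← g.map_smul, h0, g.map_zero]
    rw [inf_eq_right.mpr hle]; exact hJ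
  · have := hess _ h
    rw [Submodule.ne_bot_iff] at this ⊢
    obtain ⟨z, hz, hz0⟩ := this
    obtain ⟨hzker, hzmap⟩ := Submodule.mem_inf.mp hz
    obtain ⟨a, haJ, haz⟩ := hzmap
    refine ⟨a, Submodule.mem_inf.mpr ⟨?_, haJ⟩, ?_⟩
    · show op a • g m = 0
      rw [← g.map_smul]
      show g (lmulAux m a) = 0
      rw [haz]
      exact hzker
    · rintro rfl
      apply hz0
      rw [← haz]
      show op (0:A) • m = 0
      simp

theorem extractEmb {M : Type w} [AddCommGroup M] [Module Aᵐᵒᵖ M]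
    (hX : IsNonsingularMod A X) (g : M →ₗ[Aᵐᵒᵖ] X) (hg : g ≠ 0) :
    ∃ K : Submodule Aᵐᵒᵖ M, K ≠ ⊥ ∧ ∃ e : K →ₗ[Aᵐᵒᵖ] X, Function.Injective e := by
  by_cases hess : ∀ K : Submodule Aᵐᵒᵖ M, K ≠ ⊥ → LinearMap.ker g ⊓ K ≠ ⊥
  · exact absurd (essKerZero hX g hess) hg
  · push_neg at hess
    obtain ⟨K, hK, hKk⟩ := hess
    refine ⟨K, hK, g.comp K.subtype, ?_⟩
    rw [← LinearMap.ker_eq_bot, eq_bot_iff]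
    intro x hx
    have hx' : (x : M) ∈ LinearMap.ker g ⊓ K := ⟨hx, x.2⟩
    rw [hKk, Submodule.mem_bot] at hx'
    rw [Submodule.mem_bot]
    exact Subtype.ext hx'

/-- the property: no nonzero submodule of N embeds into X. -/
def NoEmb (X : Type v) [AddCommGroup X] [Module Aᵐᵒᵖ X] (N : Submodule Aᵐᵒᵖ A) : Prop :=
  ∀ D : Submodule Aᵐᵒᵖ A, D ≤ N → D ≠ ⊥ → ¬∃ f : D →ₗ[Aᵐᵒᵖ] X, Function.Injective f

theorem noEmb_bot : NoEmb X (⊥ : Submodule Aᵐᵒᵖ A) := by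
  intro D hD hne _
  exact hne (le_bot_iff.mp hD)

theorem noEmb_sup (hX : IsNonsingularMod A X) {M N : Submodule Aᵐᵒᵖ A}
    (hM : NoEmb X M) (hN : NoEmb X N) : NoEmb X (M ⊔ N) := by
  rintro D hD hDne ⟨f, hf⟩
  -- step 1 : D ⊓ N = ⊥
  have hDN : D ⊓ N = ⊥ := by
    by_contra h
    exact hN (D ⊓ N) inf_le_right h
      ⟨f.comp (Submodule.inclusion inf_le_left),
        hf.comp (Submodule.inclusion_injective _)⟩
  -- step 2 : build ψ : M' → X
  set q : A →ₗ[Aᵐᵒᵖ] A ⧸ N := N.mkQ with hq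
  set qD : D →ₗ[Aᵐᵒᵖ] A ⧸ N := q.comp D.subtype with hqD
  have hqDinj : Function.Injective qD := by
    rw [← LinearMap.ker_eq_bot, eq_bot_iff]
    intro x hx
    have : (x : A) ∈ N := (Submodule.Quotient.mk_eq_zero N).mp hx
    have : (x : A) ∈ D ⊓ N := ⟨x.2, this⟩
    rw [hDN, Submodule.mem_bot] at this
    rw [Submodule.mem_bot]
    exact Subtype.ext this
  set e := LinearEquiv.ofInjective qD hqDinj with he
  set M' : Submodule Aᵐᵒᵖ A := M ⊓ Submodule.comap q (LinearMap.range qD) with hM'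
  have hq' : ∀ m : M', q (m : A) ∈ LinearMap.range qD := fun m => m.2.2
  set q' : M' →ₗ[Aᵐᵒᵖ] LinearMap.range qD :=
    LinearMap.codRestrict (LinearMap.range qD) (q.comp M'.subtype) hq' with hq'def
  set ψ : M' →ₗ[Aᵐᵒᵖ] X := f.comp ((e.symm : LinearMap.range qD →ₗ[Aᵐᵒᵖ] D).comp q') with hψ
  -- ψ ≠ 0
  obtain ⟨d, hdD, hd0⟩ := Submodule.ne_bot_iff D |>.mp hDne
  obtain ⟨m, hmM, n, hnN, hmn⟩ := Submodule.mem_sup.mp (hD hdD)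
  have hqm : q m = qD ⟨d, hdD⟩ := by
    show q m = q d
    rw [← hmn]
    simp [hq, Submodule.Quotient.mk_eq_zero, hnN, Submodule.Quotient.mk_add]
  have hmM' : m ∈ M' := by
    have hr : q m ∈ LinearMap.range qD := hqm ▸ ⟨⟨d, hdD⟩, rfl⟩
    exact ⟨hmM, hr⟩
  have hψne : ψ ≠ 0 := by
    intro h0
    have h1 : ψ ⟨m, hmM'⟩ = 0 := by rw [h0]; rfl
    have h2 : q' ⟨m, hmM'⟩ = e ⟨d, hdD⟩ := by
      apply Subtype.ext
      show q m = _
      rw [hqm, he]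
      rfl
    rw [hψ] at h1
    simp only [LinearMap.comp_apply] at h1
    rw [h2] at h1
    rw [LinearEquiv.coe_coe, LinearEquiv.symm_apply_apply] at h1
    have : (⟨d, hdD⟩ : D) = 0 := hf (by rw [h1, f.map_zero])
    exact hd0 (congrArg Subtype.val this)
  -- extract
  obtain ⟨K, hKne, emb, hemb⟩ := extractEmb hX ψ hψne
  -- transfer K to an ideal
  refine hM (K.map M'.subtype) (le_trans (Submodule.map_subtype_le M' K) inf_le_left) ?_ ?_
  · rw [Submodule.ne_bot_iff] at hKne ⊢
    obtain ⟨x, hxK, hx0⟩ := hKne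
    exact ⟨(x : A), ⟨x, hxK, rfl⟩, fun h => hx0 (Subtype.ext h)⟩
  · refine ⟨emb.comp (Submodule.equivMapOfInjective M'.subtype (Submodule.injective_subtype M') K).symm.toLinearMap, ?_⟩
    exact hemb.comp (LinearEquiv.injective _)

theorem noEmb_finsup (hX : IsNonsingularMod A X) {ι : Type*} (s : Finset ι)
    (f : ι → Submodule Aᵐᵒᵖ A) (hs : ∀ i ∈ s, NoEmb X (f i)) :
    NoEmb X (⨆ i ∈ s, f i) := by
  classical
  induction s using Finset.induction_on with
  | empty => simpa using (noEmb_bot (X := X))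
  | insert a t hnotmem ih =>
    rw [Finset.iSup_insert]
    exact noEmb_sup hX (hs a (Finset.mem_insert_self a t))
      (ih fun i hi => hs i (Finset.mem_insert_of_mem hi))

theorem noEmb_sSup (hX : IsNonsingularMod A X) (S : Set (Submodule Aᵐᵒᵖ A))
    (hS : ∀ N ∈ S, NoEmb X N) : NoEmb X (sSup S) := by
  rintro D hD hDne ⟨f, hf⟩
  obtain ⟨d, hdD, hd0⟩ := Submodule.ne_bot_iff D |>.mp hDne
  have hdS : d ∈ ⨆ N : S, (N : Submodule Aᵐᵒᵖ A) := by
    rw [← sSup_eq_iSup']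
    exact hD hdD
  obtain ⟨t, ht⟩ := Submodule.exists_finset_of_mem_iSup _ hdS
  have hF : NoEmb X (⨆ N ∈ t, (N : Submodule Aᵐᵒᵖ A)) :=
    noEmb_finsup hX t _ (fun i _ => hS i i.2)
  set D' : Submodule Aᵐᵒᵖ A := Submodule.span Aᵐᵒᵖ {d} with hD'
  have hD'le : D' ≤ ⨆ N ∈ t, (N : Submodule Aᵐᵒᵖ A) := by
    rw [hD', Submodule.span_le, Set.singleton_subset_iff]
    exact ht
  have hD'D : D' ≤ D := by
    rw [hD', Submodule.span_le, Set.singleton_subset_iff]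
    exact hdD
  refine hF D' hD'le ?_ ⟨f.comp (Submodule.inclusion hD'D), hf.comp (Submodule.inclusion_injective _)⟩
  rw [Submodule.ne_bot_iff]
  exact ⟨d, Submodule.mem_span_singleton_self d, hd0⟩

end Aux

/-- Let `X` be a non-singular non-zero right `A`-module and let `C` be the sum of
all non-zero right ideals of `A` having no non-zero submodule isomorphic to a submodule of `X`.
Then `X` is injective with respect to the module `C_A`. -/
theorem stmt5 (A : Type u) [Ring A] (X : Type v) [AddCommGroup X] [Module Aᵐᵒᵖ X]
    [Nontrivial X] (hX : IsNonsingularMod A X)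
    (C : Submodule Aᵐᵒᵖ A)
    (hC : C = sSup {Ci : Submodule Aᵐᵒᵖ A | Ci ≠ ⊥ ∧
      ∀ D : Submodule Aᵐᵒᵖ A, D ≤ Ci → D ≠ ⊥ →
        ¬∃ f : D →ₗ[Aᵐᵒᵖ] X, Function.Injective f}) :
    IsInjectiveWrt Aᵐᵒᵖ X ↥C := by
  intro Y₁ f
  refine ⟨0, fun y => ?_⟩
  suffices h : f = 0 by rw [h]; rfl
  by_contra hne
  obtain ⟨K, hKne, e, he⟩ := extractEmb (A := A) (X := X) (M := ↥Y₁) hX f hne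
  have hPC : NoEmb X C := by
    rw [hC]
    exact noEmb_sSup hX _ (fun N hN => hN.2)
  set φ : Y₁ →ₗ[Aᵐᵒᵖ] A := C.subtype.comp Y₁.subtype with hφdef
  have hφ : Function.Injective φ :=
    (Submodule.injective_subtype C).comp (Submodule.injective_subtype Y₁)
  refine hPC (K.map φ) ?_ ?_
    ⟨e.comp (Submodule.equivMapOfInjective φ hφ K).symm.toLinearMap,
      he.comp (LinearEquiv.injective _)⟩
  · rintro a ⟨x, _, rfl⟩
    exact ((x : Y₁) : C).2
  · rw [Submodule.ne_bot_iff] at hKne ⊢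
    obtain ⟨x, hxK, hx0⟩ := hKne
    exact ⟨φ x, ⟨x, hxK, rfl⟩, fun h => hx0 (hφ (by rw [h, φ.map_zero]))⟩
end

section
/- Let A be a ring, X a quasi-injective non-singular non-zero right A-module, {C_i : i ∈ I} the set of all non-zero right ideals of A such that no non-zero submodule of the A-module C_i is isomorphic to a submodule of X, and {D_j : j ∈ J} the set of all non-zero right ideals of A that are isomorphic to a submodule of X. Set C = Σ_{i∈I} C_i, D = Σ_{j∈J} D_j, and B = C + D. Then X is injective with respect to the essential right ideal B. -/
open MulOpposite

open MulOpposite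

section Ess
variable {R : Type*} [Ring R] {M N : Type*} [AddCommGroup M] [AddCommGroup N]
  [Module R M] [Module R N]

/-- elementwise essentiality of a submodule -/
def EssSub (K : Submodule R M) : Prop :=
  ∀ x : M, x ≠ 0 → ∃ r : R, r • x ∈ K ∧ r • x ≠ 0

theorem EssSub.mono {K K' : Submodule R M} (h : EssSub K) (hle : K ≤ K') : EssSub K' := by
  intro x hx
  obtain ⟨r, h1, h2⟩ := h x hx
  exact ⟨r, hle h1, h2⟩

theorem EssSub.comap {K : Submodule R N} (h : EssSub K) (f : M →ₗ[R] N) :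
    EssSub (K.comap f) := by
  intro x hx
  by_cases hfx : f x = 0
  · exact ⟨1, by simp [Submodule.mem_comap, hfx], by simpa using hx⟩
  · obtain ⟨r, h1, h2⟩ := h (f x) hfx
    refine ⟨r, by simpa [Submodule.mem_comap, map_smul] using h1, ?_⟩
    intro hc
    apply h2
    rw [← map_smul, hc, map_zero]

theorem essSub_isEssentialRightIdeal {A : Type*} [Ring A] {B : Submodule Aᵐᵒᵖ A}
    (h : EssSub B) : IsEssentialRightIdeal A B := by
  intro C hC
  obtain ⟨x, hxC, hx⟩ := (Submodule.ne_bot_iff C).mp hC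
  obtain ⟨r, h1, h2⟩ := h x hx
  intro hbot
  exact h2 (by
    have : r • x ∈ B ⊓ C := ⟨h1, C.smul_mem r hxC⟩
    rwa [hbot, Submodule.mem_bot] at this)

/-- Lemma A: a linear map into a nonsingular module with essential kernel is zero. -/
theorem essKer_eq_zero {A : Type u} [Ring A] {X : Type v} [AddCommGroup X] [Module Aᵐᵒᵖ X]
    (hX : IsNonsingularMod A X) {M : Type*} [AddCommGroup M] [Module Aᵐᵒᵖ M]
    (g : M →ₗ[Aᵐᵒᵖ] X) (hess : EssSub (LinearMap.ker g)) : ∀ m : M, g m = 0 := by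
  intro m
  -- the map a ↦ op a • m
  let h : A →ₗ[Aᵐᵒᵖ] M :=
    { toFun := fun a => op a • m
      map_add' := by intro a b; rw [op_add, add_smul]
      map_smul' := by
        intro c a
        have h1 : c • a = a * c.unop := rfl
        simp only [RingHom.id_apply, h1]
        show op (a * c.unop) • m = c • op a • m
        rw [show op (a * c.unop) = c * op a by simp [MulOpposite.op_mul], mul_smul] }
  apply hX
  apply essSub_isEssentialRightIdeal
  have hc : EssSub ((LinearMap.ker g).comap h) := hess.comap h
  apply hc.mono
  intro a ha
  simp only [Submodule.mem_comap, LinearMap.mem_ker] at ha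
  have : g (op a • m) = op a • g m := map_smul g _ _
  show op a • g m = 0
  rw [← this]
  exact ha
end Ess

section Pclass
variable {A : Type u} [Ring A] {X : Type v} [AddCommGroup X] [Module Aᵐᵒᵖ X]

/-- no nonzero submodule of `M` embeds into `X` -/
def NoEmbed (X : Type v) [AddCommGroup X] [Module Aᵐᵒᵖ X] (M : Submodule Aᵐᵒᵖ A) : Prop :=
  ∀ N : Submodule Aᵐᵒᵖ A, N ≤ M → N ≠ ⊥ → ¬∃ f : N →ₗ[Aᵐᵒᵖ] X, Function.Injective f

/-- dichotomy: a map `M → X` is zero, or some nonzero submodule of `M` embeds into `X`. -/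
theorem dichotomy (hX : IsNonsingularMod A X) (M : Submodule Aᵐᵒᵖ A)
    (g : M →ₗ[Aᵐᵒᵖ] X) :
    (∀ m, g m = 0) ∨ ∃ W : Submodule Aᵐᵒᵖ A, W ≤ M ∧ W ≠ ⊥ ∧
      ∃ g' : W →ₗ[Aᵐᵒᵖ] X, Function.Injective g' := by
  by_cases hess : EssSub (LinearMap.ker g)
  · exact Or.inl (essKer_eq_zero hX g hess)
  · right
    rw [EssSub] at hess
    push_neg at hess
    obtain ⟨x, hx0, hx⟩ := hess
    refine ⟨Submodule.span Aᵐᵒᵖ {(x : A)}, ?_, ?_, ?_⟩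
    · rw [Submodule.span_le, Set.singleton_subset_iff]; exact x.2
    · rw [Submodule.ne_bot_iff]
      refine ⟨(x : A), Submodule.subset_span rfl, ?_⟩
      simpa using hx0
    · have hWM : Submodule.span Aᵐᵒᵖ {(x : A)} ≤ M := by
        rw [Submodule.span_le, Set.singleton_subset_iff]; exact x.2
      refine ⟨g.comp (Submodule.inclusion hWM), ?_⟩
      rw [injective_iff_map_eq_zero]
      intro w hw
      obtain ⟨r, hr⟩ := Submodule.mem_span_singleton.mp w.2
      have hincl : Submodule.inclusion hWM w = r • x := by
        apply Subtype.ext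
        exact hr.symm
      have hgz : g (r • x) = 0 := by
        rw [← hincl]; exact hw
      have : r • x = 0 := hx r (LinearMap.mem_ker.mpr hgz)
      apply Subtype.ext
      have : (w : A) = ((r • x : M) : A) := hr.symm
      rw [this]
      simp [‹r • x = 0›]

theorem noEmbed_bot : NoEmbed X (⊥ : Submodule Aᵐᵒᵖ A) := by
  intro N hN hN0 _
  exact hN0 (le_bot_iff.mp hN)

/-- quotient-flavored step: if `NoEmbed X C₂` and `V ≤ map (mkQ K) C₂` admits an embedding
into `X`, then `V = ⊥`. -/
theorem noEmbed_quot (hX : IsNonsingularMod A X) {C₂ K : Submodule Aᵐᵒᵖ A}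
    (hP : NoEmbed X C₂) (V : Submodule Aᵐᵒᵖ (A ⧸ K)) (hV : V ≤ Submodule.map K.mkQ C₂)
    (ψ : V →ₗ[Aᵐᵒᵖ] X) (hψ : Function.Injective ψ) : V = ⊥ := by
  set V' := C₂ ⊓ Submodule.comap K.mkQ V with hV'
  -- the map V' → V
  have hmem : ∀ v : V', K.mkQ (v : A) ∈ V := fun v => v.2.2
  let p : V' →ₗ[Aᵐᵒᵖ] V := (K.mkQ.domRestrict V').codRestrict V hmem
  have hsurj : Function.Surjective p := by
    rintro ⟨v, hv⟩
    obtain ⟨c, hc, hcv⟩ := hV hv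
    exact ⟨⟨c, hc, by simpa [Submodule.mem_comap, hcv] using hv⟩, Subtype.ext hcv⟩
  let g : V' →ₗ[Aᵐᵒᵖ] X := ψ.comp p
  rcases dichotomy hX V' g with hzero | ⟨W, hWV', hW0, g', hg'⟩
  · -- then V = ⊥ since p surjective and ψ injective
    rw [Submodule.eq_bot_iff]
    rintro v hv
    obtain ⟨w, hw⟩ := hsurj ⟨v, hv⟩
    have : ψ ⟨v, hv⟩ = 0 := by rw [← hw]; exact hzero w
    have := hψ (by rw [this, map_zero] : ψ ⟨v, hv⟩ = ψ 0)
    exact congrArg Subtype.val this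
  · exact absurd ⟨g', hg'⟩ (hP W (hWV'.trans (by rw [hV']; exact inf_le_left)) hW0)

/-- closure of `NoEmbed` under pairwise sup. -/
theorem noEmbed_sup (hX : IsNonsingularMod A X) {C₁ C₂ : Submodule Aᵐᵒᵖ A}
    (h1 : NoEmbed X C₁) (h2 : NoEmbed X C₂) : NoEmbed X (C₁ ⊔ C₂) := by
  intro N hN hN0 ⟨φ, hφ⟩
  -- N ⊓ C₁ = ⊥
  have hNC1 : N ⊓ C₁ = ⊥ := by
    by_contra hne
    exact h1 (N ⊓ C₁) inf_le_right hne
      ⟨φ.comp (Submodule.inclusion inf_le_left), hφ.comp (Submodule.inclusion_injective _)⟩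
  -- map into quotient by C₁
  set V := Submodule.map C₁.mkQ N with hVdef
  have hVle : V ≤ Submodule.map C₁.mkQ C₂ := by
    rintro v ⟨n, hn, rfl⟩
    obtain ⟨c1, hc1, c2, hc2, hsum⟩ := Submodule.mem_sup.mp (hN hn)
    refine ⟨c2, hc2, ?_⟩
    have : C₁.mkQ c1 = 0 := by simpa [Submodule.mkQ_apply] using (Submodule.Quotient.mk_eq_zero C₁).mpr hc1
    rw [← hsum, map_add, this, zero_add]
  -- N ≃ V
  let p : N →ₗ[Aᵐᵒᵖ] V := (C₁.mkQ.domRestrict N).codRestrict V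
    (fun n => Submodule.mem_map_of_mem n.2)
  have hpbij : Function.Bijective p := by
    constructor
    · rw [injective_iff_map_eq_zero]
      intro n hn
      have : C₁.mkQ (n : A) = 0 := congrArg Subtype.val hn
      have hnC1 : (n : A) ∈ C₁ := (Submodule.Quotient.mk_eq_zero C₁).mp (by simpa using this)
      have : (n : A) ∈ N ⊓ C₁ := ⟨n.2, hnC1⟩
      rw [hNC1, Submodule.mem_bot] at this
      exact Subtype.ext this
    · rintro ⟨v, hv⟩
      obtain ⟨n, hn, hnv⟩ := hv
      exact ⟨⟨n, hn⟩, Subtype.ext hnv⟩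
  let e := LinearEquiv.ofBijective p hpbij
  have hVbot : V = ⊥ := noEmbed_quot hX h2 V hVle (φ.comp e.symm.toLinearMap)
    (hφ.comp e.symm.injective)
  -- then N ≤ C₁, so N = N ⊓ C₁ = ⊥
  apply hN0
  rw [← hNC1]
  rw [eq_comm, inf_eq_left]
  intro n hn
  have : C₁.mkQ n ∈ V := Submodule.mem_map_of_mem hn
  rw [hVbot, Submodule.mem_bot] at this
  exact (Submodule.Quotient.mk_eq_zero C₁).mp (by simpa using this)

end Pclass

section Pclass2
variable {A : Type u} [Ring A] {X : Type v} [AddCommGroup X] [Module Aᵐᵒᵖ X]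

theorem noEmbed_sSup (hX : IsNonsingularMod A X) {S : Set (Submodule Aᵐᵒᵖ A)}
    (hS : ∀ Ci ∈ S, NoEmbed X Ci) : NoEmbed X (sSup S) := by
  intro N hN hN0 ⟨φ, hφ⟩
  obtain ⟨x, hxN, hx0⟩ := (Submodule.ne_bot_iff N).mp hN0
  have hxS : x ∈ ⨆ i : S, (i : Submodule Aᵐᵒᵖ A) := by
    rw [← sSup_eq_iSup']; exact hN hxN
  obtain ⟨s, hs⟩ := Submodule.mem_iSup_iff_exists_finset.mp hxS
  have hsup : x ∈ s.sup (fun i : S => (i : Submodule Aᵐᵒᵖ A)) := by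
    rwa [Finset.sup_eq_iSup]
  have hPsup : NoEmbed X (s.sup (fun i : S => (i : Submodule Aᵐᵒᵖ A))) := by
    apply Finset.sup_induction noEmbed_bot (fun a ha b hb => noEmbed_sup hX ha hb)
    exact fun i _ => hS i i.2
  have hWN : Submodule.span Aᵐᵒᵖ {x} ≤ N :=
    (Submodule.span_le).mpr (Set.singleton_subset_iff.mpr hxN)
  refine hPsup (Submodule.span Aᵐᵒᵖ {x})
    ((Submodule.span_le).mpr (Set.singleton_subset_iff.mpr hsup)) ?_
    ⟨φ.comp (Submodule.inclusion hWN), hφ.comp (Submodule.inclusion_injective _)⟩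
  rw [Submodule.ne_bot_iff]
  exact ⟨x, Submodule.subset_span rfl, hx0⟩

/-- any hom from a submodule of a `NoEmbed` ideal into `X` vanishes -/
theorem hom_eq_zero_of_noEmbed (hX : IsNonsingularMod A X) {Cbig : Submodule Aᵐᵒᵖ A}
    (hP : NoEmbed X Cbig) {M : Submodule Aᵐᵒᵖ A} (hM : M ≤ Cbig)
    (g : M →ₗ[Aᵐᵒᵖ] X) : ∀ m, g m = 0 := by
  rcases dichotomy hX M g with h | ⟨W, hWM, hW0, g', hg'⟩
  · exact h
  · exact absurd ⟨g', hg'⟩ (hP W (hWM.trans hM) hW0)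

end Pclass2

section Glue
variable {R : Type*} [Ring R] {Y : Type*} [AddCommGroup Y] [Module R Y]
  {X : Type*} [AddCommGroup X] [Module R X]

/-- glue two compatible maps on `M` and `W` into a map on `M ⊔ W`. -/
theorem glue (M W : Submodule R Y) (g : M →ₗ[R] X) (k : W →ₗ[R] X)
    (hagree : ∀ (z : Y) (h1 : z ∈ M) (h2 : z ∈ W), g ⟨z, h1⟩ = k ⟨z, h2⟩) :
    ∃ h : (M ⊔ W : Submodule R Y) →ₗ[R] X,
      ∀ (z : Y) (hz : z ∈ M), h ⟨z, Submodule.mem_sup_left hz⟩ = g ⟨z, hz⟩ := by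
  have hdec : ∀ z : (M ⊔ W : Submodule R Y), ∃ m, m ∈ M ∧ ∃ w, w ∈ W ∧ m + w = (z : Y) :=
    fun z => Submodule.mem_sup.mp z.2
  choose m hm w hw hsum using hdec
  set u : (M ⊔ W : Submodule R Y) → X := fun z => g ⟨m z, hm z⟩ + k ⟨w z, hw z⟩ with hu
  have key : ∀ (z : (M ⊔ W : Submodule R Y)) (a b : Y) (ha : a ∈ M) (hb : b ∈ W),
      a + b = (z : Y) → u z = g ⟨a, ha⟩ + k ⟨b, hb⟩ := by
    intro z a b ha hb hab
    have hd : m z - a = b - w z := by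
      rw [sub_eq_sub_iff_add_eq_add, hsum z, ← hab, add_comm]
    have hdM : m z - a ∈ M := sub_mem (hm z) ha
    have hdW : m z - a ∈ W := hd ▸ sub_mem hb (hw z)
    have e1 : (⟨m z, hm z⟩ : M) = ⟨a, ha⟩ + ⟨m z - a, hdM⟩ := by
      apply Subtype.ext; simp
    have e2 : (⟨w z, hw z⟩ : W) = ⟨b, hb⟩ - ⟨m z - a, hdW⟩ := by
      apply Subtype.ext; simp [hd]
    rw [hu]
    simp only [e1, e2, map_add, map_sub]
    rw [hagree (m z - a) hdM hdW]
    abel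
  refine ⟨{ toFun := u
            map_add' := ?_
            map_smul' := ?_ }, ?_⟩
  · intro z₁ z₂
    have h1 : (m z₁ + m z₂) + (w z₁ + w z₂) = ((z₁ + z₂ : (M ⊔ W : Submodule R Y)) : Y) := by
      push_cast
      rw [← hsum z₁, ← hsum z₂]; abel
    rw [key (z₁ + z₂) _ _ (add_mem (hm z₁) (hm z₂)) (add_mem (hw z₁) (hw z₂)) h1]
    have e1 : (⟨m z₁ + m z₂, add_mem (hm z₁) (hm z₂)⟩ : M) = ⟨m z₁, hm z₁⟩ + ⟨m z₂, hm z₂⟩ := by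
      apply Subtype.ext; rfl
    have e2 : (⟨w z₁ + w z₂, add_mem (hw z₁) (hw z₂)⟩ : W) = ⟨w z₁, hw z₁⟩ + ⟨w z₂, hw z₂⟩ := by
      apply Subtype.ext; rfl
    rw [e1, e2, map_add, map_add]
    show _ = u z₁ + u z₂
    rw [hu]; exact add_add_add_comm _ _ _ _
  · intro r z
    show u (r • z) = r • u z
    have h1 : (r • m z) + (r • w z) = ((r • z : (M ⊔ W : Submodule R Y)) : Y) := by
      push_cast
      rw [← smul_add, hsum z]
    rw [key (r • z) _ _ (Submodule.smul_mem M r (hm z)) (Submodule.smul_mem W r (hw z)) h1]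
    have e1 : (⟨r • m z, Submodule.smul_mem M r (hm z)⟩ : M) = r • ⟨m z, hm z⟩ := by
      apply Subtype.ext; rfl
    have e2 : (⟨r • w z, Submodule.smul_mem W r (hw z)⟩ : W) = r • ⟨w z, hw z⟩ := by
      apply Subtype.ext; rfl
    rw [e1, e2, map_smul, map_smul]
    rw [hu, smul_add]
  · intro z hz
    have h1 : z + 0 = ((⟨z, Submodule.mem_sup_left hz⟩ : (M ⊔ W : Submodule R Y)) : Y) := by
      simp
    show u _ = _
    rw [key _ z 0 hz (zero_mem W) h1]
    have : (⟨0, zero_mem W⟩ : W) = 0 := rfl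
    rw [this, map_zero, add_zero]
end Glue

section Quasi
variable {A : Type u} [Ring A] {X : Type v} [AddCommGroup X] [Module Aᵐᵒᵖ X]

/-- using quasi-injectivity, a map `g` on `M` can be matched by a map on an ideal `E`
embeddable into `X`, agreeing on the overlap. -/
theorem quasi_ext (hquasi : IsInjectiveWrt Aᵐᵒᵖ X X) {E M : Submodule Aᵐᵒᵖ A}
    (ι : E →ₗ[Aᵐᵒᵖ] X) (hι : Function.Injective ι) (g : M →ₗ[Aᵐᵒᵖ] X) :
    ∃ k : E →ₗ[Aᵐᵒᵖ] X, ∀ (z : A) (h1 : z ∈ M) (h2 : z ∈ E), g ⟨z, h1⟩ = k ⟨z, h2⟩ := by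
  set E₁ : Submodule Aᵐᵒᵖ E := M.comap E.subtype with hE₁
  let j : E₁ →ₗ[Aᵐᵒᵖ] M :=
    { toFun := fun e => ⟨e.1.1, e.2⟩
      map_add' := fun a b => rfl
      map_smul' := fun r a => rfl }
  set Y₁ : Submodule Aᵐᵒᵖ X := Submodule.map ι E₁ with hY₁
  let p : E₁ →ₗ[Aᵐᵒᵖ] Y₁ := (ι.domRestrict E₁).codRestrict Y₁
    (fun e => Submodule.mem_map_of_mem e.2)
  have hpbij : Function.Bijective p := by
    constructor
    · intro a b hab
      have : ι a.1 = ι b.1 := congrArg Subtype.val hab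
      exact Subtype.ext (hι this)
    · rintro ⟨y, hy⟩
      obtain ⟨e, he, hev⟩ := hy
      exact ⟨⟨e, he⟩, Subtype.ext hev⟩
  let e₁ := LinearEquiv.ofBijective p hpbij
  obtain ⟨G, hG⟩ := hquasi Y₁ ((g.comp j).comp e₁.symm.toLinearMap)
  refine ⟨G.comp ι, ?_⟩
  intro z h1 h2
  have hezE₁ : (⟨z, h2⟩ : E) ∈ E₁ := by
    rw [hE₁]; exact h1
  set ee : E₁ := ⟨⟨z, h2⟩, hezE₁⟩ with hee
  have hy : ι ⟨z, h2⟩ ∈ Y₁ := Submodule.mem_map_of_mem hezE₁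
  have hpee : p ee = ⟨ι ⟨z, h2⟩, hy⟩ := rfl
  have : G (ι ⟨z, h2⟩) = ((g.comp j).comp e₁.symm.toLinearMap) ⟨ι ⟨z, h2⟩, hy⟩ := hG ⟨ι ⟨z, h2⟩, hy⟩
  show g ⟨z, h1⟩ = G (ι ⟨z, h2⟩)
  rw [this]
  have hsymm : e₁.symm ⟨ι ⟨z, h2⟩, hy⟩ = ee := by
    rw [← hpee]
    exact e₁.symm_apply_apply ee
  simp only [LinearMap.coe_comp, Function.comp_apply, LinearEquiv.coe_coe, hsymm]
  rfl
end Quasi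

section Main
variable {A : Type u} [Ring A] {X : Type v} [AddCommGroup X] [Module Aᵐᵒᵖ X]

/-- `W` is a "partner" for `X`: every map `M → X` admits a compatible map on `W`. -/
def Partner (X : Type v) [AddCommGroup X] [Module Aᵐᵒᵖ X] (W : Submodule Aᵐᵒᵖ A) : Prop :=
  ∀ (M : Submodule Aᵐᵒᵖ A) (g : M →ₗ[Aᵐᵒᵖ] X),
    ∃ k : W →ₗ[Aᵐᵒᵖ] X, ∀ (z : A) (h1 : z ∈ M) (h2 : z ∈ W), g ⟨z, h1⟩ = k ⟨z, h2⟩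

theorem zorn_main (B : Submodule Aᵐᵒᵖ A) (Ws : Set (Submodule Aᵐᵒᵖ A))
    (hWB : ∀ W ∈ Ws, W ≤ B) (hpart : ∀ W ∈ Ws, Partner X W) (hcov : B ≤ sSup Ws) :
    IsInjectiveWrt Aᵐᵒᵖ X B := by
  classical
  intro Y₁ f
  set M₀ : Submodule Aᵐᵒᵖ A := Submodule.map B.subtype Y₁ with hM₀
  let eq₀ := Submodule.equivMapOfInjective B.subtype B.injective_subtype Y₁
  let f₀ : M₀ →ₗ[Aᵐᵒᵖ] X := f.comp eq₀.symm.toLinearMap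
  set fst := LinearMap.fst Aᵐᵒᵖ A X with hfst
  set G₀ : Submodule Aᵐᵒᵖ (A × X) := LinearMap.range (M₀.subtype.prod f₀) with hG₀def
  set S : Set (Submodule Aᵐᵒᵖ (A × X)) :=
    {G | G₀ ≤ G ∧ (∀ x : X, ((0 : A), x) ∈ G → x = 0) ∧ Submodule.map fst G ≤ B} with hSdef
  have hG₀S : G₀ ∈ S := by
    refine ⟨le_refl _, ?_, ?_⟩
    · rintro x ⟨m, hm⟩
      have h1 : (m : A) = 0 := congrArg Prod.fst hm
      have h2 : f₀ m = x := congrArg Prod.snd hm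
      have : m = 0 := Subtype.ext h1
      rw [← h2, this, map_zero]
    · rintro a ⟨p, ⟨m, hm⟩, hpa⟩
      have h1 : p.1 = (m : A) := (congrArg Prod.fst hm).symm
      rw [← hpa]
      show p.1 ∈ B
      rw [h1]
      exact Submodule.map_subtype_le B Y₁ m.2
  obtain ⟨G, hG₀G, hGmax⟩ := zorn_le_nonempty₀ S (by
    intro c hcS hchain y hyc
    refine ⟨sSup c, ⟨?_, ?_, ?_⟩, fun z hz => le_sSup hz⟩
    · exact le_trans (hcS hyc).1 (le_sSup hyc)
    · intro x hx
      obtain ⟨G', hG'c, hxG'⟩ := (Submodule.mem_sSup_of_directed ⟨y, hyc⟩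
        (hchain.directedOn)).mp hx
      exact (hcS hG'c).2.1 x hxG'
    · rintro a ⟨p, hp, hpa⟩
      obtain ⟨G', hG'c, hpG'⟩ := (Submodule.mem_sSup_of_directed ⟨y, hyc⟩
        (hchain.directedOn)).mp hp
      exact (hcS hG'c).2.2 ⟨p, hpG', hpa⟩) G₀ hG₀S
  have hGS : G ∈ S := hGmax.1
  set Mstar : Submodule Aᵐᵒᵖ A := Submodule.map fst G with hMstar
  -- uniqueness of second coordinates
  have uniq : ∀ (a : A) (x y : X), (a, x) ∈ G → (a, y) ∈ G → x = y := by
    intro a x y hx hy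
    have : ((0 : A), x - y) ∈ G := by
      have := G.sub_mem hx hy
      simpa using this
    have := hGS.2.1 _ this
    exact sub_eq_zero.mp this
  have hex : ∀ m : Mstar, ∃ x : X, ((m : A), x) ∈ G := by
    rintro ⟨a, ha⟩
    obtain ⟨p, hp, hpa⟩ := ha
    exact ⟨p.2, by rwa [show ((a : A), p.2) = p by rw [← hpa]; rfl]⟩
  choose vf hvf using hex
  let gstar : Mstar →ₗ[Aᵐᵒᵖ] X :=
    { toFun := vf
      map_add' := by
        intro m₁ m₂
        apply uniq ((m₁ + m₂ : Mstar) : A) _ _ (hvf _)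
        have := G.add_mem (hvf m₁) (hvf m₂)
        simpa using this
      map_smul' := by
        intro r m
        apply uniq ((r • m : Mstar) : A) _ _ (hvf _)
        have := G.smul_mem r (hvf m)
        simpa using this }
  have hgstar : ∀ m : Mstar, ((m : A), gstar m) ∈ G := hvf
  -- the key step: every partner piece is inside Mstar
  have step : ∀ W ∈ Ws, W ≤ Mstar := by
    intro W hW
    obtain ⟨k, hk⟩ := hpart W hW Mstar gstar
    obtain ⟨h, hh⟩ := glue Mstar W gstar k hk
    set G' : Submodule Aᵐᵒᵖ (A × X) :=
      LinearMap.range ((Mstar ⊔ W).subtype.prod h) with hG'def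
    have hGG' : G ≤ G' := by
      rintro ⟨a, x⟩ hax
      have haM : a ∈ Mstar := ⟨(a, x), hax, rfl⟩
      have hxval : x = gstar ⟨a, haM⟩ := uniq a x _ hax (hgstar ⟨a, haM⟩)
      refine ⟨⟨a, Submodule.mem_sup_left haM⟩, ?_⟩
      have := hh a haM
      simp only [LinearMap.prod_apply, Function.prod, Submodule.coe_subtype]
      rw [this, ← hxval]
    have hG'S : G' ∈ S := by
      refine ⟨le_trans (le_trans hGS.1 hGG') (le_refl _), ?_, ?_⟩
      · rintro x ⟨y, hy⟩
        have h1 : (y : A) = 0 := congrArg Prod.fst hy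
        have h2 : h y = x := congrArg Prod.snd hy
        rw [← h2, show y = 0 from Subtype.ext h1, map_zero]
      · rintro a ⟨p, ⟨y, hy⟩, hpa⟩
        have h1 : p.1 = (y : A) := (congrArg Prod.fst hy).symm
        rw [← hpa]
        show p.1 ∈ B
        rw [h1]
        exact sup_le hGS.2.2 (hWB W hW) y.2
    have hG'G : G' ≤ G := hGmax.2 hG'S (le_trans hGG' (le_refl _))
    intro w hw
    have : ((w : A), h ⟨w, Submodule.mem_sup_right hw⟩) ∈ G' :=
      ⟨⟨w, Submodule.mem_sup_right hw⟩, rfl⟩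
    exact ⟨_, hG'G this, rfl⟩
  -- conclude B ≤ Mstar
  have hBM : B ≤ Mstar := le_trans hcov (sSup_le step)
  refine ⟨gstar.comp (Submodule.inclusion hBM), ?_⟩
  intro y
  -- (↑↑y, f y) ∈ G₀ ≤ G
  have hyG₀ : (((y : B) : A), f y) ∈ G₀ := by
    refine ⟨eq₀ y, ?_⟩
    have h1 : ((eq₀ y : M₀) : A) = ((y : B) : A) :=
      Submodule.coe_equivMapOfInjective_apply B.subtype B.injective_subtype Y₁ y
    have h2 : f₀ (eq₀ y) = f y := by
      show f (eq₀.symm (eq₀ y)) = f y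
      rw [LinearEquiv.symm_apply_apply]
    simp only [LinearMap.prod_apply, Function.prod, Submodule.coe_subtype]
    rw [h1, h2]
  have hyG : (((y : B) : A), f y) ∈ G := hG₀G hyG₀
  show gstar (Submodule.inclusion hBM (y : B)) = f y
  exact uniq _ _ _ (hgstar _) hyG
end Main

/-- If moreover `X` is quasi-injective, then `X` is injective with respect to the
essential right ideal `B = C + D`. -/
theorem stmt7 (A : Type u) [Ring A] (X : Type v) [AddCommGroup X] [Module Aᵐᵒᵖ X]
    [Nontrivial X] (hX : IsNonsingularMod A X)
    (hquasi : IsInjectiveWrt Aᵐᵒᵖ X X)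
    (C D B : Submodule Aᵐᵒᵖ A)
    (hC : C = sSup {Ci : Submodule Aᵐᵒᵖ A | Ci ≠ ⊥ ∧
      ∀ D' : Submodule Aᵐᵒᵖ A, D' ≤ Ci → D' ≠ ⊥ →
        ¬∃ f : D' →ₗ[Aᵐᵒᵖ] X, Function.Injective f})
    (hD : D = sSup {Dj : Submodule Aᵐᵒᵖ A | Dj ≠ ⊥ ∧
      ∃ f : Dj →ₗ[Aᵐᵒᵖ] X, Function.Injective f})
    (hB : B = C ⊔ D) :
    IsInjectiveWrt Aᵐᵒᵖ X ↥B := by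
  set Dset : Set (Submodule Aᵐᵒᵖ A) := {Dj : Submodule Aᵐᵒᵖ A | Dj ≠ ⊥ ∧
      ∃ f : Dj →ₗ[Aᵐᵒᵖ] X, Function.Injective f} with hDset
  have hPC : NoEmbed X C := by
    rw [hC]
    exact noEmbed_sSup hX (fun Ci hCi => fun N h1 h2 => hCi.2 N h1 h2)
  apply zorn_main B (insert C Dset)
  · intro W hW
    rcases hW with rfl | hW
    · rw [hB]; exact le_sup_left
    · calc W ≤ sSup Dset := le_sSup hW
        _ = D := hD.symm
        _ ≤ B := by rw [hB]; exact le_sup_right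
  · intro W hW
    rcases hW with rfl | hW
    · -- partner for C : the zero map
      intro M g
      refine ⟨0, ?_⟩
      intro z h1 h2
      have hz : ∀ m : (M ⊓ W : Submodule Aᵐᵒᵖ A),
          (g.comp (Submodule.inclusion (inf_le_left : M ⊓ W ≤ M))) m = 0 :=
        hom_eq_zero_of_noEmbed hX hPC (inf_le_right : M ⊓ W ≤ W) _
      have := hz ⟨z, h1, h2⟩
      exact this
    · -- partner for a Dj : quasi-injectivity
      intro M g
      obtain ⟨ι, hι⟩ := hW.2
      exact quasi_ext hquasi ι hι g
  · rw [hB, sSup_insert, ← hD]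
end

section
/- Let A be a ring, G = G(A_A) the Goldie radical of the module A_A (which is a two-sided ideal of A), and h : A → A/G the natural ring epimorphism. If B is an essential right ideal of A, then h(B) is an essential right ideal of the ring h(A) = A/G. -/
open MulOpposite

open MulOpposite

section Aux

lemma essential_mono {A : Type*} [Ring A] {B B' : Submodule Aᵐᵒᵖ A}
    (h : B ≤ B') (hB : IsEssentialRightIdeal A B) : IsEssentialRightIdeal A B' := by
  intro C hC hbot
  exact hB C hC (le_bot_iff.mp (hbot ▸ inf_le_inf_right C h))

/-- Left multiplication by `c` is `Aᵐᵒᵖ`-linear on `A`. -/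
def mulLeftLin {A : Type*} [Ring A] (c : A) : A →ₗ[Aᵐᵒᵖ] A where
  toFun x := c * x
  map_add' := mul_add c
  map_smul' r x := by
    show c * (x * r.unop) = (c * x) * r.unop
    rw [mul_assoc]

lemma cdiv_essential {A : Type*} [Ring A] {B : Submodule Aᵐᵒᵖ A}
    (hB : IsEssentialRightIdeal A B) (c : A) :
    IsEssentialRightIdeal A (B.comap (mulLeftLin c)) := by
  intro C hC hbot
  by_cases hE : C.map (mulLeftLin c) = ⊥
  · have hle : C ≤ B.comap (mulLeftLin c) := by
      intro x hx
      have : mulLeftLin c x ∈ (⊥ : Submodule Aᵐᵒᵖ A) := hE ▸ Submodule.mem_map_of_mem hx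
      simp only [Submodule.mem_bot] at this
      simp [Submodule.mem_comap, this]
    have : B.comap (mulLeftLin c) ⊓ C = C := inf_eq_right.mpr hle
    exact hC (this ▸ hbot)
  · have := hB _ hE
    obtain ⟨y, hy, hyne⟩ := Submodule.exists_mem_ne_zero_of_ne_bot this
    obtain ⟨hyB, x, hxC, rfl⟩ := by
      simpa [Submodule.mem_inf, Submodule.mem_map] using hy
    have hx : x ∈ B.comap (mulLeftLin c) ⊓ C := ⟨hyB, hxC⟩
    have hxne : x ≠ 0 := by rintro rfl; exact hyne (map_zero _)
    rw [hbot] at hx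
    exact hxne (by simpa using hx)

lemma nonsingular_goldie_quot (A : Type*) [Ring A] :
    IsNonsingularMod A (A ⧸ goldieRadical A A) := by
  intro x hx
  obtain ⟨a, rfl⟩ := Submodule.Quotient.mk_surjective _ x
  rw [Submodule.Quotient.mk_eq_zero]
  have : a ∈ sInf {Y : Submodule Aᵐᵒᵖ A | IsNonsingularMod A (A ⧸ Y)} := by
    rw [Submodule.mem_sInf]
    intro Y hY
    have hann : rightAnn A ((Submodule.Quotient.mk a : A ⧸ goldieRadical A A)) ≤
        rightAnn A ((Submodule.Quotient.mk a : A ⧸ Y)) := by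
      intro r hr
      have hr' : op r • a ∈ goldieRadical A A := by
        have : (Submodule.Quotient.mk (op r • a) : A ⧸ goldieRadical A A) = 0 := by
          rw [Submodule.Quotient.mk_smul]; exact hr
        exact (Submodule.Quotient.mk_eq_zero _).mp this
      have : op r • a ∈ Y := Submodule.mem_sInf.mp hr' Y hY
      show op r • (Submodule.Quotient.mk a : A ⧸ Y) = 0
      rw [← Submodule.Quotient.mk_smul, Submodule.Quotient.mk_eq_zero]
      exact this
    have := hY _ (essential_mono hann hx)
    exact (Submodule.Quotient.mk_eq_zero _).mp this
  exact this

lemma mk'_eq_zero_iff {A : Type*} [Ring A] (G : TwoSidedIdeal A) (x : A) :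
    RingCon.mk' G.ringCon x = 0 ↔ x ∈ G := by
  constructor
  · intro h
    simpa using (TwoSidedIdeal.rel_iff G x 0).mp (Quotient.eq''.mp h)
  · intro h
    exact Quot.sound ((TwoSidedIdeal.rel_iff G x 0).mpr (by simpa using h))

end Aux

/-- If `G = G(A_A)` (a two-sided ideal), `h : A → A/G` the natural epimorphism,
and `B` an essential right ideal of `A`, then `h(B)` is an essential right ideal of `A/G`. -/
theorem stmt9 (A : Type u) [Ring A] (G : TwoSidedIdeal A)
    (hG : ∀ x : A, x ∈ G ↔ x ∈ goldieRadical A A)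
    (B : Submodule Aᵐᵒᵖ A) (hB : IsEssentialRightIdeal A B)
    (B' : Submodule (G.ringCon.Quotient)ᵐᵒᵖ G.ringCon.Quotient)
    (hB' : (B' : Set G.ringCon.Quotient) = (RingCon.mk' G.ringCon) '' (B : Set A)) :
    IsEssentialRightIdeal G.ringCon.Quotient B' := by
  intro C' hC' hbot
  obtain ⟨c', hc'C, hc'ne⟩ := Submodule.exists_mem_ne_zero_of_ne_bot hC'
  obtain ⟨c, rfl⟩ : ∃ c : A, RingCon.mk' G.ringCon c = c' := Quot.exists_rep c'
  have key : (B.comap (mulLeftLin c)) ≤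
      rightAnn A ((Submodule.Quotient.mk c : A ⧸ goldieRadical A A)) := by
    intro a ha
    have hmem : c * a ∈ B := ha
    have h1 : RingCon.mk' G.ringCon (c * a) ∈ B' := by
      rw [← SetLike.mem_coe, hB']
      exact ⟨c * a, hmem, rfl⟩
    have h2 : RingCon.mk' G.ringCon (c * a) ∈ C' := by
      have heq : RingCon.mk' G.ringCon (c * a) =
          op (RingCon.mk' G.ringCon a) • (RingCon.mk' G.ringCon c) := by
        rw [op_smul_eq_mul, ← map_mul]
      rw [heq]
      exact C'.smul_mem _ hc'C
    have h0 : RingCon.mk' G.ringCon (c * a) = 0 := by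
      have := Submodule.mem_inf.mpr ⟨h1, h2⟩
      rw [hbot] at this
      simpa using this
    have hGmem : c * a ∈ goldieRadical A A := (hG _).mp ((mk'_eq_zero_iff G _).mp h0)
    show op a • (Submodule.Quotient.mk c : A ⧸ goldieRadical A A) = 0
    rw [← Submodule.Quotient.mk_smul, Submodule.Quotient.mk_eq_zero]
    simpa [op_smul_eq_mul] using hGmem
  have hess := essential_mono key (cdiv_essential hB c)
  have hc0 := nonsingular_goldie_quot A _ hess
  have hcG : c ∈ goldieRadical A A := (Submodule.Quotient.mk_eq_zero _).mp hc0
  exact hc'ne ((mk'_eq_zero_iff G c).mpr ((hG c).mpr hcG))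
end

section
/- Every right strongly semiprime ring A is semiprime (has no non-zero nilpotent two-sided ideals) and right non-singular (Sing A_A = 0). -/
open MulOpposite

open MulOpposite

namespace Stmt19Aux

variable {A : Type u} [Ring A]

lemma mem_rightAnn_iff {x a : A} : a ∈ rightAnn A x ↔ x * a = 0 := by
  show op a • x = 0 ↔ x * a = 0
  rw [op_smul_eq_mul]

lemma essential_top : IsEssentialRightIdeal A ⊤ := by
  intro C hC
  simpa using hC

lemma essential_mono {B B' : Submodule Aᵐᵒᵖ A} (h : B ≤ B')
    (hB : IsEssentialRightIdeal A B) : IsEssentialRightIdeal A B' := by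
  intro C hC hbot
  exact hB C hC (eq_bot_iff.2 (le_trans (inf_le_inf_right C h) hbot.le))

lemma essential_inf {B B' : Submodule Aᵐᵒᵖ A} (hB : IsEssentialRightIdeal A B)
    (hB' : IsEssentialRightIdeal A B') : IsEssentialRightIdeal A (B ⊓ B') := by
  intro C hC
  rw [inf_assoc]
  exact hB _ (hB' C hC)

lemma essential_elem {B : Submodule Aᵐᵒᵖ A} (hB : IsEssentialRightIdeal A B)
    {c : A} (hc : c ≠ 0) : ∃ a : A, c * a ≠ 0 ∧ c * a ∈ B := by
  have hC : (Submodule.span Aᵐᵒᵖ {c} : Submodule Aᵐᵒᵖ A) ≠ ⊥ := by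
    rw [Ne, Submodule.span_singleton_eq_bot]
    exact hc
  obtain ⟨x, hx, hx0⟩ := (Submodule.ne_bot_iff _).1 (hB _ hC)
  obtain ⟨hxB, hxC⟩ := hx
  obtain ⟨r, rfl⟩ := Submodule.mem_span_singleton.1 hxC
  refine ⟨r.unop, ?_, ?_⟩
  · rwa [← op_smul_eq_mul, op_unop]
  · rwa [← op_smul_eq_mul, op_unop]

lemma essential_of_elem {B : Submodule Aᵐᵒᵖ A}
    (h : ∀ c : A, c ≠ 0 → ∃ a : A, c * a ≠ 0 ∧ c * a ∈ B) :
    IsEssentialRightIdeal A B := by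
  intro C hC
  obtain ⟨c, hcC, hc0⟩ := (Submodule.ne_bot_iff _).1 hC
  obtain ⟨a, h1, h2⟩ := h c hc0
  refine (Submodule.ne_bot_iff _).2 ⟨c * a, ⟨h2, ?_⟩, h1⟩
  simpa [op_smul_eq_mul] using C.smul_mem (op a) hcC

/-- The right singular ideal of `A`, as a two-sided ideal. -/
def Zideal (A : Type u) [Ring A] : TwoSidedIdeal A :=
  TwoSidedIdeal.mk' {x : A | IsEssentialRightIdeal A (rightAnn A x)}
    (by
      refine essential_mono (B := ⊤) ?_ essential_top
      intro a _
      rw [mem_rightAnn_iff, zero_mul])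
    (by
      intro x y hx hy
      refine essential_mono (B := rightAnn A x ⊓ rightAnn A y) ?_ (essential_inf hx hy)
      rintro a ⟨ha1, ha2⟩
      exact mem_rightAnn_iff.2 (by
        rw [add_mul, mem_rightAnn_iff.1 ha1, mem_rightAnn_iff.1 ha2, add_zero]))
    (by
      intro x hx
      refine essential_mono (B := rightAnn A x) ?_ hx
      intro a ha
      exact mem_rightAnn_iff.2 (by rw [neg_mul, mem_rightAnn_iff.1 ha, neg_zero]))
    (by
      intro x y hy
      refine essential_mono (B := rightAnn A y) ?_ hy
      intro a ha
      exact mem_rightAnn_iff.2 (by rw [mul_assoc, mem_rightAnn_iff.1 ha, mul_zero]))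
    (by
      intro x y hx
      refine essential_of_elem ?_
      intro c hc
      by_cases hyc : y * c = 0
      · refine ⟨1, by rwa [mul_one], ?_⟩
        exact mem_rightAnn_iff.2 (by rw [mul_one, mul_assoc, hyc, mul_zero])
      · obtain ⟨a, ha0, ha⟩ := essential_elem hx hyc
        have ha' : x * (y * c * a) = 0 := mem_rightAnn_iff.1 ha
        refine ⟨a, ?_, ?_⟩
        · intro h
          rw [mul_assoc, h, mul_zero] at ha0
          exact ha0 rfl
        · refine mem_rightAnn_iff.2 ?_
          rw [mul_assoc, ← mul_assoc y c a]
          exact ha')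

lemma mem_Zideal_iff {x : A} :
    x ∈ Zideal A ↔ IsEssentialRightIdeal A (rightAnn A x) := by
  unfold Zideal
  exact TwoSidedIdeal.mem_mk' _ _ _ _ _ _ x

/-- The left annihilator of a two-sided ideal, as a two-sided ideal. -/
def lAnn (I : TwoSidedIdeal A) : TwoSidedIdeal A :=
  TwoSidedIdeal.mk' {a : A | ∀ t ∈ I, a * t = 0}
    (fun t _ => zero_mul t)
    (fun {x y} hx hy t ht => by rw [add_mul, hx t ht, hy t ht, add_zero])
    (fun {x} hx t ht => by rw [neg_mul, hx t ht, neg_zero])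
    (fun {x y} hy t ht => by rw [mul_assoc, hy t ht, mul_zero])
    (fun {x y} hx t ht => by rw [mul_assoc, hx (y * t) (I.mul_mem_left y t ht)])

lemma mem_lAnn_iff {I : TwoSidedIdeal A} {a : A} :
    a ∈ lAnn I ↔ ∀ t ∈ I, a * t = 0 := by
  unfold lAnn
  exact TwoSidedIdeal.mem_mk' _ _ _ _ _ _ a

lemma chain (T : TwoSidedIdeal A) : ∀ (m : ℕ) (c : A), c ≠ 0 →
    (∀ l : List A, l.length = m → (∀ x ∈ l, x ∈ T) → c * l.prod = 0) →
    ∃ b : A, c * b ≠ 0 ∧ ∀ t ∈ T, (c * b) * t = 0 := by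
  intro m
  induction m with
  | zero =>
    intro c hc h
    exact absurd (by simpa using h [] rfl (by simp)) hc
  | succ m ih =>
    intro c hc h
    by_cases hct : ∀ t ∈ T, c * t = 0
    · exact ⟨1, by rwa [mul_one], by simpa using hct⟩
    · push_neg at hct
      obtain ⟨t, htT, hct0⟩ := hct
      obtain ⟨b, hb0, hb⟩ := ih (c * t) hct0 (fun l hl hlT => by
        have := h (t :: l) (by simp [hl]) (by
          intro x hx
          rcases List.mem_cons.1 hx with h' | h'
          · exact h' ▸ htT
          · exact hlT x h')
        simpa [mul_assoc] using this)
      refine ⟨t * b, by rwa [← mul_assoc], ?_⟩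
      intro s hs
      rw [← mul_assoc]
      exact hb s hs

end Stmt19Aux

/-- every right strongly semiprime ring is semiprime (no non-zero nilpotent
two-sided ideals) and right non-singular. -/
theorem stmt19 (A : Type u) [Ring A] (hA : IsRightStronglySemiprime A) :
    (∀ (T : TwoSidedIdeal A) (n : ℕ), 0 < n →
        (∀ l : List A, l.length = n → (∀ x ∈ l, x ∈ T) → l.prod = 0) → T = ⊥) ∧
      IsNonsingularMod A A := by
  open Stmt19Aux in
  constructor
  · intro T n hn hnil
    obtain ⟨K, hKsub, hK⟩ := hA (Stmt19Aux.lAnn T) (by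
      intro C hC
      obtain ⟨c, hcC, hc0⟩ := (Submodule.ne_bot_iff _).1 hC
      obtain ⟨b, hb0, hb⟩ := Stmt19Aux.chain T n c hc0
        (fun l hl hlT => by rw [hnil l hl hlT, mul_zero])
      refine ⟨c * b, ?_, hb0, Stmt19Aux.mem_lAnn_iff.2 hb⟩
      simpa [op_smul_eq_mul] using C.smul_mem (op b) hcC)
    refine eq_bot_iff.2 ?_
    intro t ht
    rw [TwoSidedIdeal.mem_bot]
    refine hK t ?_
    intro k hk
    exact Stmt19Aux.mem_lAnn_iff.1 (hKsub hk) t ht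
  · intro x hx
    by_contra hx0
    have hxZ : x ∈ Stmt19Aux.Zideal A := Stmt19Aux.mem_Zideal_iff.2 hx
    -- the two-sided ideal Z + l(Z)
    set Z := Stmt19Aux.Zideal A with hZdef
    set L := Stmt19Aux.lAnn Z with hLdef
    let ZL : TwoSidedIdeal A := TwoSidedIdeal.mk'
      {a : A | ∃ z ∈ Z, ∃ l ∈ L, a = z + l}
      ⟨0, Z.zero_mem, 0, L.zero_mem, by rw [add_zero]⟩
      (by
        rintro a b ⟨z1, hz1, l1, hl1, rfl⟩ ⟨z2, hz2, l2, hl2, rfl⟩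
        exact ⟨z1 + z2, Z.add_mem hz1 hz2, l1 + l2, L.add_mem hl1 hl2, by abel⟩)
      (by
        rintro a ⟨z, hz, l, hl, rfl⟩
        exact ⟨-z, Z.neg_mem hz, -l, L.neg_mem hl, by abel⟩)
      (by
        rintro x' a ⟨z, hz, l, hl, rfl⟩
        exact ⟨x' * z, Z.mul_mem_left _ _ hz, x' * l, L.mul_mem_left _ _ hl, by
          rw [mul_add]⟩)
      (by
        rintro a y' ⟨z, hz, l, hl, rfl⟩
        exact ⟨z * y', Z.mul_mem_right _ _ hz, l * y', L.mul_mem_right _ _ hl, by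
          rw [add_mul]⟩)
    obtain ⟨K, hKsub, hK⟩ := hA ZL (by
      intro C hC
      obtain ⟨c, hcC, hc0⟩ := (Submodule.ne_bot_iff _).1 hC
      by_cases hcZ : ∀ z ∈ Z, c * z = 0
      · refine ⟨c, hcC, hc0, ?_⟩
        exact (TwoSidedIdeal.mem_mk' _ _ _ _ _ _ c).2
          ⟨0, Z.zero_mem, c, Stmt19Aux.mem_lAnn_iff.2 hcZ, by rw [zero_add]⟩
      · push_neg at hcZ
        obtain ⟨z, hzZ, hcz0⟩ := hcZ
        refine ⟨c * z, ?_, hcz0, ?_⟩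
        · simpa [op_smul_eq_mul] using C.smul_mem (op z) hcC
        · exact (TwoSidedIdeal.mem_mk' _ _ _ _ _ _ _).2
            ⟨c * z, Z.mul_mem_left _ _ hzZ, 0, L.zero_mem, by rw [add_zero]⟩)
    -- build an essential right ideal E annihilated by all of K on elements of Z
    have hE : ∀ S : Finset A, (∀ k ∈ S, k ∈ ZL) →
        ∃ E : Submodule Aᵐᵒᵖ A, IsEssentialRightIdeal A E ∧
          ∀ a, a ∈ E → a ∈ Z → ∀ k ∈ S, k * a = 0 := by
      classical
      intro S
      induction S using Finset.induction_on with
      | empty => exact fun _ => ⟨⊤, Stmt19Aux.essential_top, fun a _ _ k hk => by simp at hk⟩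
      | insert k S hnotmem ih =>
        intro hmem
        obtain ⟨E, hEess, hEann⟩ := ih (fun k' hk' => hmem k' (Finset.mem_insert_of_mem hk'))
        obtain ⟨z, hz, l, hl, hkzl⟩ := (TwoSidedIdeal.mem_mk' _ _ _ _ _ _ k).1
          (hmem k (Finset.mem_insert_self k S))
        refine ⟨E ⊓ rightAnn A z, Stmt19Aux.essential_inf hEess
          (Stmt19Aux.mem_Zideal_iff.1 hz), ?_⟩
        rintro a ⟨haE, haz⟩ haZ k' hk'
        rcases Finset.mem_insert.1 hk' with h' | h'
        · subst h'
          rw [hkzl, add_mul, Stmt19Aux.mem_rightAnn_iff.1 haz,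
            Stmt19Aux.mem_lAnn_iff.1 hl a haZ, add_zero]
        · exact hEann a haE haZ k' h'
    obtain ⟨E, hEess, hEann⟩ := hE K (fun k hk => hKsub hk)
    obtain ⟨b, hb0, hbE⟩ := Stmt19Aux.essential_elem hEess hx0
    have hbZ : x * b ∈ Z := Z.mul_mem_right _ _ hxZ
    exact hb0 (hK (x * b) (fun k hk => hEann (x * b) hbE hbZ k hk))
end
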